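/- arXiv:2202.02778 — 11 statements merged into one kernel-verified Lean document; each statement's English description precedes it below -/
import Mathlib

section
/- Let N ≥ 1, let a₁,…,a_N be distinct points of the unit circle {z ∈ ℂ : |z| = 1}, let d₁,…,d_N ∈ ℤ ∖ {0} satisfy Σ_{j=1}^N d_j = 2, and let b be a point of the unit circle with b ∉ {a₁,…,a_N}. Define m_*(z) = i·b·∏_{j=1}^N ( (z−a_j)/|z−a_j| · |b−a_j|/(b−a_j) )^{d_j} for z ∈ ℂ ∖ {a₁,…,a_N}. Then |m_*(z)| = 1 for every z ∈ ℂ ∖ {a₁,…,a_N}, and for every z on the unit circle with z ∉ {a₁,…,a_N} one has m_*(z)² = −z²; in particular m_*(z) = ±iz, i.e. m_*(z) is perpendicular to the outer normal ν(z) = z of the unit disk (tangency of the canonical harmonic map at the boundary away from the boundary vortices). -/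
open Complex Finset

lemma conj_eq_inv_of_abs_one {z : ℂ} (hz : ‖z‖ = 1) :
    (starRingEnd ℂ) z = z⁻¹ := by
  have h : z * (starRingEnd ℂ) z = 1 := by
    rw [Complex.mul_conj]
    norm_cast
    rw [Complex.normSq_eq_norm_sq, hz]; norm_num
  field_simp [eq_inv_of_mul_eq_one_left (by rwa [mul_comm] at h)]
  rw [one_div]; exact eq_inv_of_mul_eq_one_right h

lemma abs_sq_eq {w : ℂ} : ((‖w‖ : ℝ) : ℂ) ^ 2 = w * (starRingEnd ℂ) w := by
  rw [Complex.mul_conj]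
  norm_cast
  exact Complex.sq_norm w

lemma sq_key {z a : ℂ} (hz : ‖z‖ = 1) (ha : ‖a‖ = 1) (hza : z ≠ a) :
    ((z - a) / (‖z - a‖ : ℂ)) ^ 2 = -(z * a) := by
  have hz0 : z ≠ 0 := by intro h; simp [h] at hz
  have ha0 : a ≠ 0 := by intro h; simp [h] at ha
  have hsub : z - a ≠ 0 := sub_ne_zero.mpr hza
  have habs : ((‖z - a‖ : ℝ) : ℂ) ^ 2 = (z - a) * (z⁻¹ - a⁻¹) := by
    rw [abs_sq_eq, map_sub, conj_eq_inv_of_abs_one hz, conj_eq_inv_of_abs_one ha]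
  have habs0 : ((‖z - a‖ : ℝ) : ℂ) ≠ 0 := by
    simpa using (norm_ne_zero_iff.mpr hsub)
  have hne : ((‖z - a‖ : ℝ) : ℂ) ^ 2 ≠ 0 := pow_ne_zero 2 habs0
  rw [div_pow, div_eq_iff hne, habs]
  field_simp
  ring

lemma prod_zpow_const {ι : Type*} {x : ℂ} (hx : x ≠ 0) (s : Finset ι) (d : ι → ℤ) :
    ∏ j ∈ s, x ^ d j = x ^ (∑ j ∈ s, d j) := by
  classical
  induction s using Finset.cons_induction with
  | empty => simp
  | cons j s hj ih => rw [Finset.prod_cons, Finset.sum_cons, zpow_add₀ hx, ih]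

/-- Boundary tangency of the canonical harmonic map on the unit disk
(Theorem 1.8 of Ignat–Kurzke): the explicit map
`m_*(z) = i b ∏_j ((z-a_j)/|z-a_j| · |b-a_j|/(b-a_j))^{d_j}`
has modulus one away from the boundary vortices, and on the unit circle it
satisfies `m_*(z)² = -z²`, i.e. `m_*(z) = ± i z`. -/
theorem stmt_0 (N : ℕ) (hN : 1 ≤ N) (a : Fin N → ℂ) (ha : Function.Injective a)
    (haU : ∀ j, ‖a j‖ = 1)
    (d : Fin N → ℤ) (hd : ∀ j, d j ≠ 0) (hsum : ∑ j, d j = 2)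
    (b : ℂ) (hb : ‖b‖ = 1) (hba : ∀ j, b ≠ a j)
    (m : ℂ → ℂ)
    (hm : ∀ z : ℂ, m z = Complex.I * b *
      ∏ j, ((z - a j) / (‖z - a j‖ : ℂ) *
            ((‖b - a j‖ : ℂ) / (b - a j))) ^ (d j)) :
    (∀ z : ℂ, (∀ j, z ≠ a j) → ‖m z‖ = 1) ∧
    (∀ z : ℂ, ‖z‖ = 1 → (∀ j, z ≠ a j) →
      m z ^ 2 = -z ^ 2 ∧ (m z = Complex.I * z ∨ m z = -(Complex.I * z))) := by
  have hb0 : b ≠ 0 := by intro h; simp [h] at hb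
  -- each factor has modulus one
  have habsf : ∀ z : ℂ, (∀ j, z ≠ a j) → ∀ j,
      ‖(z - a j) / (‖z - a j‖ : ℂ) *
        ((‖b - a j‖ : ℂ) / (b - a j))‖ = 1 := by
    intro z hz j
    have h1 : z - a j ≠ 0 := sub_ne_zero.mpr (hz j)
    have h2 : b - a j ≠ 0 := sub_ne_zero.mpr (hba j)
    have h1' : ‖z - a j‖ ≠ 0 := norm_ne_zero_iff.mpr h1
    have h2' : ‖b - a j‖ ≠ 0 := norm_ne_zero_iff.mpr h2
    rw [norm_mul, norm_div, norm_div, Complex.norm_real, Complex.norm_real,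
      norm_norm, norm_norm]
    field_simp
  constructor
  · intro z hz
    rw [hm z, norm_mul, norm_mul, Complex.norm_I, hb, norm_prod]
    have : ∀ j ∈ Finset.univ, ‖
        ((z - a j) / (‖z - a j‖ : ℂ) *
          ((‖b - a j‖ : ℂ) / (b - a j))) ^ (d j)‖ = 1 := by
      intro j _
      rw [norm_zpow, habsf z hz j, one_zpow]
    rw [Finset.prod_congr rfl this]
    simp
  · intro z hzU hz
    have hz0 : z ≠ 0 := by intro h; simp [h] at hzU
    have hfsq : ∀ j : Fin N,
        ((z - a j) / (‖z - a j‖ : ℂ) *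
          ((‖b - a j‖ : ℂ) / (b - a j))) ^ 2 = z / b := by
      intro j
      have ha0 : a j ≠ 0 := by intro h; have := haU j; simp [h] at this
      have h2 : b - a j ≠ 0 := sub_ne_zero.mpr (hba j)
      have hkey1 := sq_key hzU (haU j) (hz j)
      have hkey2 := sq_key hb (haU j) (hba j)
      have h2' : ((‖b - a j‖ : ℝ) : ℂ) ≠ 0 := by
        simpa using norm_ne_zero_iff.mpr h2
      have hinv : ((‖b - a j‖ : ℂ) / (b - a j)) ^ 2 = (-(b * a j))⁻¹ := by
        rw [← hkey2, div_pow, div_pow, inv_div]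
      rw [mul_pow, hkey1, hinv]
      field_simp
    have hf0 : ∀ j : Fin N,
        ((z - a j) / (‖z - a j‖ : ℂ) *
          ((‖b - a j‖ : ℂ) / (b - a j))) ≠ 0 := by
      intro j h
      have := habsf z hz j
      rw [h] at this
      simp at this
    have hmsq : m z ^ 2 = -z ^ 2 := by
      rw [hm z, mul_pow, mul_pow, Complex.I_sq, ← Finset.prod_pow]
      have : ∀ j ∈ Finset.univ,
          (((z - a j) / (‖z - a j‖ : ℂ) *
            ((‖b - a j‖ : ℂ) / (b - a j))) ^ (d j)) ^ 2
            = (z / b) ^ (d j) := by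
        intro j _
        rw [← zpow_natCast _ 2, ← zpow_mul, mul_comm (d j), zpow_mul,
          zpow_natCast, hfsq j]
      rw [Finset.prod_congr rfl this,
        prod_zpow_const (div_ne_zero hz0 hb0) Finset.univ d, hsum]
      have : (z / b) ^ (2 : ℤ) = z ^ 2 / b ^ 2 := by
        rw [show (2 : ℤ) = ((2 : ℕ) : ℤ) by norm_num, zpow_natCast, div_pow]
      rw [this]
      field_simp
    refine ⟨hmsq, ?_⟩
    have hfac : (m z - Complex.I * z) * (m z + Complex.I * z) = 0 := by
      have : (m z - Complex.I * z) * (m z + Complex.I * z)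
          = m z ^ 2 - (Complex.I ^ 2) * z ^ 2 := by ring
      rw [this, hmsq, Complex.I_sq]
      ring
    rcases mul_eq_zero.mp hfac with h | h
    · exact Or.inl (by linear_combination h)
    · exact Or.inr (by linear_combination h)
end

section
/- Let N ≥ 1, let a₁,…,a_N be distinct points of the unit circle {z ∈ ℂ : |z| = 1}, and let d₁,…,d_N ∈ ℤ ∖ {0} satisfy Σ_{j=1}^N d_j = 2. Then for every b on the unit circle with b ∉ {a₁,…,a_N}, the square ( b·∏_{j=1}^N ( |b−a_j|/(b−a_j) )^{d_j} )² equals ∏_{j=1}^N a_j^{−d_j}; in particular this square does not depend on b, so for any two such points b, b̃ one has b·∏_{j=1}^N (|b−a_j|/(b−a_j))^{d_j} = ± b̃·∏_{j=1}^N (|b̃−a_j|/(b̃−a_j))^{d_j}. -/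
open Finset

private lemma prod_zpow_eq_zpow_sum {ι : Type*} (s : Finset ι) (f : ι → ℤ) {c : ℂ}
    (hc : c ≠ 0) : ∏ j ∈ s, c ^ (f j) = c ^ (∑ j ∈ s, f j) := by
  classical
  induction s using Finset.induction with
  | empty => simp
  | @insert x s h ih => rw [prod_insert h, sum_insert h, zpow_add₀ hc, ih]

private lemma key_sq {a b : ℂ} (haU : ‖a‖ = 1) (hbU : ‖b‖ = 1)
    (hab : b ≠ a) :
    (((‖b - a‖ : ℂ) / (b - a)) ^ 2 : ℂ) = -(a * b)⁻¹ := by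
  have ha0 : a ≠ 0 := by intro h; simp [h] at haU
  have hb0 : b ≠ 0 := by intro h; simp [h] at hbU
  have hz : b - a ≠ 0 := sub_ne_zero.mpr hab
  have hca : (starRingEnd ℂ) a = a⁻¹ := by
    rw [Complex.inv_def, Complex.normSq_eq_norm_sq, haU]; simp
  have hcb : (starRingEnd ℂ) b = b⁻¹ := by
    rw [Complex.inv_def, Complex.normSq_eq_norm_sq, hbU]; simp
  have habs : ((‖b - a‖ : ℂ)) ^ 2 = (b - a) * (starRingEnd ℂ) (b - a) := by
    rw [mul_comm, ← Complex.normSq_eq_conj_mul_self, Complex.normSq_eq_norm_sq]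
    norm_cast
  rw [div_pow, habs, map_sub, hca, hcb]
  field_simp
  ring

/-- Uniqueness (up to sign) of the canonical harmonic map formula on the
unit disk: for distinct points `a₁,…,a_N` on the unit circle with nonzero
integer multiplicities summing to `2`, the square of
`b ∏_j (|b-a_j|/(b-a_j))^{d_j}` equals `∏_j a_j^{-d_j}`, hence does not depend
on the point `b` on the circle, so the quantity itself is determined up to sign. -/
theorem stmt_1 (N : ℕ) (hN : 1 ≤ N) (a : Fin N → ℂ) (ha : Function.Injective a)
    (haU : ∀ j, ‖a j‖ = 1)
    (d : Fin N → ℤ) (hd : ∀ j, d j ≠ 0) (hsum : ∑ j, d j = 2) :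
    (∀ b : ℂ, ‖b‖ = 1 → (∀ j, b ≠ a j) →
      (b * ∏ j, ((‖b - a j‖ : ℂ) / (b - a j)) ^ (d j)) ^ 2
        = ∏ j, (a j) ^ (-d j)) ∧
    (∀ b b' : ℂ, ‖b‖ = 1 → ‖b'‖ = 1 →
      (∀ j, b ≠ a j) → (∀ j, b' ≠ a j) →
      (b * ∏ j, ((‖b - a j‖ : ℂ) / (b - a j)) ^ (d j)
          = b' * ∏ j, ((‖b' - a j‖ : ℂ) / (b' - a j)) ^ (d j)) ∨
      (b * ∏ j, ((‖b - a j‖ : ℂ) / (b - a j)) ^ (d j)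
          = -(b' * ∏ j, ((‖b' - a j‖ : ℂ) / (b' - a j)) ^ (d j)))) := by
  have main : ∀ b : ℂ, ‖b‖ = 1 → (∀ j, b ≠ a j) →
      (b * ∏ j, ((‖b - a j‖ : ℂ) / (b - a j)) ^ (d j)) ^ 2
        = ∏ j, (a j) ^ (-d j) := by
    intro b hbU hb
    have hb0 : b ≠ 0 := by intro h; simp [h] at hbU
    have ha0 : ∀ j, a j ≠ 0 := fun j h => by have := haU j; simp [h] at this
    have step : ∀ j, (((‖b - a j‖ : ℂ) / (b - a j)) ^ (d j)) ^ 2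
        = (-(1:ℂ)) ^ (d j) * ((a j) ^ (-d j)) * (b⁻¹) ^ (d j) := by
      intro j
      rw [← zpow_natCast _ 2, ← zpow_mul, mul_comm (d j) _, zpow_mul,
        zpow_natCast, key_sq (haU j) hbU (hb j)]
      rw [neg_eq_neg_one_mul, mul_inv, mul_zpow, mul_zpow, inv_zpow']
      ring
    calc (b * ∏ j, ((‖b - a j‖ : ℂ) / (b - a j)) ^ (d j)) ^ 2
        = b ^ 2 * ∏ j, ((((‖b - a j‖ : ℂ) / (b - a j)) ^ (d j)) ^ 2) := by
          rw [mul_pow, ← prod_pow]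
      _ = b ^ 2 * ∏ j, ((-(1:ℂ)) ^ (d j) * ((a j) ^ (-d j)) * (b⁻¹) ^ (d j)) := by
          rw [prod_congr rfl fun j _ => step j]
      _ = b ^ 2 * ((∏ j, (-(1:ℂ)) ^ (d j)) * (∏ j, (a j) ^ (-d j))
            * (∏ j, (b⁻¹) ^ (d j))) := by
          rw [← prod_mul_distrib, ← prod_mul_distrib]
      _ = ∏ j, (a j) ^ (-d j) := by
          rw [prod_zpow_eq_zpow_sum _ _ (by norm_num : (-1:ℂ) ≠ 0),
            prod_zpow_eq_zpow_sum _ _ (inv_ne_zero hb0), hsum,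
            show ((2:ℤ)) = ((2:ℕ):ℤ) from rfl, zpow_natCast, zpow_natCast,
            neg_one_sq, one_mul, inv_pow, mul_comm, mul_assoc,
            inv_mul_cancel₀ (pow_ne_zero 2 hb0), mul_one]
  refine ⟨main, fun b b' hbU hb'U hb hb' => ?_⟩
  have h := (main b hbU hb).trans (main b' hb'U hb').symm
  have : (b * ∏ j, ((‖b - a j‖ : ℂ) / (b - a j)) ^ (d j)
      - b' * ∏ j, ((‖b' - a j‖ : ℂ) / (b' - a j)) ^ (d j))
    * (b * ∏ j, ((‖b - a j‖ : ℂ) / (b - a j)) ^ (d j)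
      + b' * ∏ j, ((‖b' - a j‖ : ℂ) / (b' - a j)) ^ (d j)) = 0 := by
    linear_combination h
  rcases mul_eq_zero.mp this with h1 | h1
  · exact Or.inl (sub_eq_zero.mp h1)
  · exact Or.inr (by linear_combination h1)
end

section
/- For every complex number a with |a| = 1, the integral ∫₀^{2π} log|e^{iθ} − a| dθ equals 0. -/
open Real MeasureTheory Set intervalIntegral

lemma aux_log_intble {c : ℝ} (_hc : 0 < c) :
    IntegrableOn (fun x => Real.log c - Real.log x) (Set.Ioc 0 c) := by
  apply intervalIntegral.integrableOn_deriv_of_nonneg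
    (g := fun x => x * Real.log c - (x * Real.log x - x))
  · exact ((continuous_id.mul continuous_const).sub
      (Real.continuous_mul_log.sub continuous_id)).continuousOn
  · intro x hx
    have h1 := Real.hasDerivAt_mul_log (ne_of_gt hx.1)
    have h2 : HasDerivAt (fun x : ℝ => x * Real.log c) (Real.log c) x := by
      simpa using (hasDerivAt_id x).mul_const (Real.log c)
    have := h2.sub (h1.sub (hasDerivAt_id x))
    rw [show Real.log c - (Real.log x + 1 - 1) = Real.log c - Real.log x by ring] at this
    exact this
  · intro x hx
    have := Real.log_le_log hx.1 hx.2.le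
    linarith

lemma aux_log_intervalIntegrable {c : ℝ} (hc : 0 < c) :
    IntervalIntegrable Real.log volume 0 c := by
  have h2 : IntervalIntegrable (fun x => Real.log c - Real.log x) volume 0 c :=
    (intervalIntegrable_iff_integrableOn_Ioc_of_le hc.le).2 (aux_log_intble hc)
  have h3 := IntervalIntegrable.sub (_root_.intervalIntegrable_const (c := Real.log c)) h2
  simpa using h3

lemma aux_logsin_intble : IntervalIntegrable (fun x => Real.log (Real.sin x)) volume 0 (π/2) := by
  have hpi := Real.pi_pos
  rw [intervalIntegrable_iff_integrableOn_Ioc_of_le (by positivity)]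
  have hg : IntegrableOn (fun x => Real.log (π/2) - Real.log x) (Set.Ioc 0 (π/2)) :=
    aux_log_intble (by positivity)
  apply Integrable.mono hg
  · exact ((Real.measurable_log.comp Real.measurable_sin).aestronglyMeasurable)
  · rw [ae_restrict_iff' measurableSet_Ioc]
    filter_upwards with x hx
    have hx1 : 0 < x := hx.1
    have hx2 : x ≤ π/2 := hx.2
    have hsin_lb : 2/π * x ≤ Real.sin x := Real.mul_le_sin hx1.le hx2
    have hsin_pos : 0 < Real.sin x := lt_of_lt_of_le (by positivity) hsin_lb
    have hsin_le : Real.sin x ≤ 1 := Real.sin_le_one x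
    have hlog_le : Real.log (Real.sin x) ≤ 0 := Real.log_nonpos hsin_pos.le hsin_le
    have hlb : Real.log (2/π * x) ≤ Real.log (Real.sin x) :=
      Real.log_le_log (by positivity) hsin_lb
    have hexp : Real.log (2/π * x) = Real.log x - Real.log (π/2) := by
      rw [Real.log_mul (by positivity) (ne_of_gt hx1), Real.log_div (by norm_num) (ne_of_gt hpi)]
      rw [Real.log_div (ne_of_gt hpi) (by norm_num)]
      ring
    have hnn : 0 ≤ Real.log (π/2) - Real.log x := by
      have := Real.log_le_log hx1 hx2
      linarith
    rw [Real.norm_eq_abs, Real.norm_eq_abs, abs_of_nonpos hlog_le, abs_of_nonneg hnn]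
    linarith [hexp ▸ hlb]

lemma aux_logcos_intble : IntervalIntegrable (fun x => Real.log (Real.cos x)) volume 0 (π/2) := by
  have h := (aux_logsin_intble.comp_sub_left (π/2)).symm
  simp only [sub_zero, sub_self, Real.sin_pi_div_two_sub] at h
  exact h

lemma aux_logsin_intble_pi : IntervalIntegrable (fun x => Real.log (Real.sin x)) volume 0 π := by
  have h := (aux_logsin_intble.comp_sub_left π).symm
  simp only [sub_zero, Real.sin_pi_sub] at h
  have h2 : π - π/2 = π/2 := by ring
  rw [h2] at h
  exact aux_logsin_intble.trans h

lemma aux_logsin_value : ∫ x in (0:ℝ)..π, Real.log (Real.sin x) = -(π * Real.log 2) := by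
  have hpi := Real.pi_pos
  set J := ∫ x in (0:ℝ)..(π/2), Real.log (Real.sin x) with hJ
  -- cos integral equals J
  have hK : ∫ x in (0:ℝ)..(π/2), Real.log (Real.cos x) = J := by
    have := intervalIntegral.integral_comp_sub_left
      (a := (0:ℝ)) (b := π/2) (fun x => Real.log (Real.sin x)) (π/2)
    simp only [sub_zero, sub_self, Real.sin_pi_div_two_sub] at this
    rw [this]
  -- total integral equals 2J
  have hI2 : ∫ x in (0:ℝ)..π, Real.log (Real.sin x) = 2 * J := by
    have hsecond : ∫ x in (π/2:ℝ)..π, Real.log (Real.sin x) = J := by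
      have := intervalIntegral.integral_comp_sub_left
        (a := (0:ℝ)) (b := π/2) (fun x => Real.log (Real.sin x)) π
      simp only [sub_zero, Real.sin_pi_sub] at this
      have h2 : π - π/2 = π/2 := by ring
      rw [h2] at this
      rw [← this]
    have h := (aux_logsin_intble.comp_sub_left π).symm
    simp only [sub_zero, Real.sin_pi_sub] at h
    have h2 : π - π/2 = π/2 := by ring
    rw [h2] at h
    rw [← intervalIntegral.integral_add_adjacent_intervals aux_logsin_intble h, hsecond]
    ring
  -- doubling
  have hdouble : ∫ x in (0:ℝ)..π, Real.log (Real.sin x)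
      = 2 * ∫ x in (0:ℝ)..(π/2), Real.log (Real.sin (2*x)) := by
    have := intervalIntegral.smul_integral_comp_mul_left
      (a := (0:ℝ)) (b := π/2) (fun x => Real.log (Real.sin x)) 2
    simp only [smul_eq_mul, mul_zero] at this
    rw [this]
    norm_num [mul_div_cancel₀]
  have hsplit : ∫ x in (0:ℝ)..(π/2), Real.log (Real.sin (2*x))
      = ∫ x in (0:ℝ)..(π/2), (Real.log 2 + Real.log (Real.sin x) + Real.log (Real.cos x)) := by
    apply intervalIntegral.integral_congr_ae
    have hae : ∀ᵐ x : ℝ, x ≠ π/2 := by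
      simp only [ae_iff, not_not]
      exact measure_singleton _
    filter_upwards [hae] with x hx hmem
    rw [Set.uIoc_of_le (by positivity : (0:ℝ) ≤ π/2)] at hmem
    have hx1 : 0 < x := hmem.1
    have hx2 : x < π/2 := lt_of_le_of_ne hmem.2 hx
    have hsin : 0 < Real.sin x := Real.sin_pos_of_pos_of_lt_pi hx1 (by linarith)
    have hcos : 0 < Real.cos x := Real.cos_pos_of_mem_Ioo ⟨by linarith, hx2⟩
    rw [Real.sin_two_mul, Real.log_mul (by positivity) (ne_of_gt hcos),
      Real.log_mul (by norm_num) (ne_of_gt hsin)]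
  have hval : ∫ x in (0:ℝ)..(π/2), (Real.log 2 + Real.log (Real.sin x) + Real.log (Real.cos x))
      = (π/2) * Real.log 2 + J + J := by
    rw [intervalIntegral.integral_add (IntervalIntegrable.add
        (_root_.intervalIntegrable_const) aux_logsin_intble) aux_logcos_intble,
      intervalIntegral.integral_add (_root_.intervalIntegrable_const) aux_logsin_intble]
    simp [hK]
    exact hJ.symm
  have : 2 * J = 2 * ((π/2) * Real.log 2 + J + J) := by
    rw [← hI2, hdouble, hsplit, hval]
  have hJval : J = -(π/2 * Real.log 2) := by linarith
  rw [hI2, hJval]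
  ring

lemma aux_abs_exp_sub_one (θ : ℝ) :
    ‖Complex.exp (θ * Complex.I) - 1‖ = 2 * |Real.sin (θ/2)| := by
  have key : Complex.exp (θ * Complex.I) - 1
      = Complex.exp ((θ/2 : ℝ) * Complex.I) * (2 * Complex.I * Complex.sin (θ/2 : ℝ)) := by
    rw [Complex.sin]
    have e1 : Complex.exp (((θ:ℂ)/2) * Complex.I) * Complex.exp (((θ:ℂ)/2) * Complex.I)
        = Complex.exp ((θ:ℂ) * Complex.I) := by
      rw [← Complex.exp_add]; ring_nf
    have e2 : Complex.exp (((θ:ℂ)/2) * Complex.I) * Complex.exp (-(((θ:ℂ)/2) * Complex.I)) = 1 := by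
      rw [← Complex.exp_add]; simp
    have hI : (Complex.I : ℂ) * Complex.I = -1 := Complex.I_mul_I
    push_cast
    symm
    calc Complex.exp (((θ:ℂ)/2) * Complex.I) *
          (2 * Complex.I * ((Complex.exp (-((θ:ℂ)/2) * Complex.I)
            - Complex.exp (((θ:ℂ)/2) * Complex.I)) * Complex.I / 2))
        = (Complex.I * Complex.I) * (Complex.exp (((θ:ℂ)/2) * Complex.I)
            * Complex.exp (-(((θ:ℂ)/2) * Complex.I))
            - Complex.exp (((θ:ℂ)/2) * Complex.I) * Complex.exp (((θ:ℂ)/2) * Complex.I)) := by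
          ring_nf
      _ = Complex.exp ((θ:ℂ) * Complex.I) - 1 := by rw [hI, e1, e2]; ring
  rw [key, norm_mul]
  rw [Complex.norm_exp_ofReal_mul_I, one_mul, norm_mul, norm_mul]
  rw [← Complex.ofReal_sin, Complex.norm_real]
  simp [Complex.norm_I]

lemma aux_logsin_half_intble :
    IntervalIntegrable (fun θ : ℝ => Real.log (Real.sin (θ/2))) volume 0 (2*π) := by
  have h := aux_logsin_intble_pi.comp_mul_left (c := 1/2)
  simp only [one_div] at h ⊢
  have : ∀ x : ℝ, (2:ℝ)⁻¹ * x = x * 2⁻¹ := fun x => mul_comm _ _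
  simp only [this] at h
  have hz : (0:ℝ) / (2:ℝ)⁻¹ = 0 := by norm_num
  have hp : π / (2:ℝ)⁻¹ = 2*π := by ring
  rw [hz, hp] at h
  simpa [div_eq_mul_inv] using h

lemma aux_g_integral :
    ∫ θ in (0:ℝ)..(2*π), Real.log (‖Complex.exp (θ * Complex.I) - 1‖) = 0 := by
  have hpi := Real.pi_pos
  have hcongr : ∫ θ in (0:ℝ)..(2*π), Real.log (‖Complex.exp (θ * Complex.I) - 1‖)
      = ∫ θ in (0:ℝ)..(2*π), (Real.log 2 + Real.log (Real.sin (θ/2))) := by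
    apply intervalIntegral.integral_congr_ae
    have hae : ∀ᵐ x : ℝ, x ≠ 2*π := by
      simp only [ae_iff, not_not]; exact measure_singleton _
    filter_upwards [hae] with θ hθ hmem
    rw [Set.uIoc_of_le (by positivity : (0:ℝ) ≤ 2*π)] at hmem
    have h1 : 0 < θ := hmem.1
    have h2 : θ < 2*π := lt_of_le_of_ne hmem.2 hθ
    have hs : 0 < Real.sin (θ/2) :=
      Real.sin_pos_of_pos_of_lt_pi (by positivity) (by linarith)
    rw [aux_abs_exp_sub_one, abs_of_pos hs, Real.log_mul (by norm_num) (ne_of_gt hs)]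
  rw [hcongr, intervalIntegral.integral_add (_root_.intervalIntegrable_const)
    aux_logsin_half_intble]
  have hhalf : ∫ θ in (0:ℝ)..(2*π), Real.log (Real.sin (θ/2)) = -(2*π*Real.log 2) := by
    have := intervalIntegral.integral_comp_div
      (a := (0:ℝ)) (b := 2*π) (fun x => Real.log (Real.sin x)) (two_ne_zero)
    rw [this]
    have hz : (0:ℝ)/2 = 0 := by norm_num
    have hp : (2*π)/2 = π := by ring
    rw [hz, hp, aux_logsin_value]
    simp; ring
  rw [hhalf]
  simp

/-- Mean-value identity `∫_{∂B₁} log|z - a| dH¹ = 0` for `a` on the unit circle,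
written in the angular parametrization: `∫₀^{2π} log|e^{iθ} - a| dθ = 0`. -/
theorem stmt_4 (a : ℂ) (ha : ‖a‖ = 1) :
    ∫ θ in (0:ℝ)..(2 * Real.pi),
      Real.log ‖Complex.exp (θ * Complex.I) - a‖ = 0 := by
  set φ := a.arg with hφ
  have haexp : a = Complex.exp (φ * Complex.I) := by
    conv_lhs => rw [← Complex.norm_mul_exp_arg_mul_I a]
    rw [ha]; simp [hφ]
  have hpoint : ∀ θ : ℝ, ‖Complex.exp (θ * Complex.I) - a‖
      = ‖Complex.exp ((θ - φ : ℝ) * Complex.I) - 1‖ := by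
    intro θ
    have hfact : Complex.exp ((θ:ℂ) * Complex.I) - a
        = Complex.exp ((φ:ℂ) * Complex.I) * (Complex.exp (((θ - φ : ℝ):ℂ) * Complex.I) - 1) := by
      rw [haexp, mul_sub, mul_one, ← Complex.exp_add]
      push_cast
      ring_nf
    rw [hfact, norm_mul, Complex.norm_exp_ofReal_mul_I, one_mul]
  have hper : Function.Periodic
      (fun θ : ℝ => Real.log (‖Complex.exp (θ * Complex.I) - 1‖)) (2*π) := by
    intro θ
    have : Complex.exp (((θ + 2*π : ℝ):ℂ) * Complex.I) = Complex.exp ((θ:ℂ) * Complex.I) := by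
      push_cast
      rw [add_mul, Complex.exp_add]
      simp [Complex.exp_two_pi_mul_I]
    simp only [this]
  calc ∫ θ in (0:ℝ)..(2*π), Real.log (‖Complex.exp (θ * Complex.I) - a‖)
      = ∫ θ in (0:ℝ)..(2*π),
          Real.log (‖Complex.exp (((θ - φ:ℝ)) * Complex.I) - 1‖) := by
        apply intervalIntegral.integral_congr
        intro θ _
        exact congrArg Real.log (hpoint θ)
    _ = ∫ θ in (0 - φ : ℝ)..(2*π - φ),
          Real.log (‖Complex.exp (θ * Complex.I) - 1‖) := by
        rw [← intervalIntegral.integral_comp_sub_right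
          (fun θ : ℝ => Real.log (‖Complex.exp (θ * Complex.I) - 1‖)) φ]
    _ = ∫ θ in (0:ℝ)..(2*π), Real.log (‖Complex.exp (θ * Complex.I) - 1‖) := by
        have := hper.intervalIntegral_add_eq (-φ) 0
        rw [show (0 - φ : ℝ) = -φ by ring, show (2*π - φ : ℝ) = -φ + 2*π by ring]
        rw [show ((0:ℝ) + 2*π) = 2*π by ring] at this
        exact this
    _ = 0 := aux_g_integral
end

section
/- Let L > 0 and let γ : ℝ → ℝ² be L-periodic (γ(t + L) = γ(t) for all t), differentiable with ‖γ'(t)‖ = 1 for all t, with γ' Lipschitz, and with γ injective on [0, L). For h > 0 and z ∈ ℝ², set K_h(z) = ∫₀¹∫₀¹ (‖z‖² + h²(s − t)²)^{−1/2} ds dt. Then there exists a constant C > 0 such that for every h ∈ (0, 1/2] and every t ∈ ℝ: | ∫₀^L K_h(γ(t) − γ(s)) ds − 2·log(1/h) | ≤ C. -/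
open MeasureTheory


open scoped RealInnerProductSpace


open MeasureTheory Real
open scoped RealInnerProductSpace

namespace IK33



/-- quadratic lower bound for exp -/
lemma exp_quad {x : ℝ} (hx : 0 ≤ x) : 1 + x + x^2/2 ≤ Real.exp x := by
  have := Real.sum_le_exp_of_nonneg hx 3
  simp [Finset.sum_range_succ] at this
  nlinarith [this]

lemma arsinh_le_self {x : ℝ} (hx : 0 ≤ x) : Real.arsinh x ≤ x := by
  rw [Real.arsinh, Real.log_le_iff_le_exp (by positivity)]
  have h1 : Real.sqrt (1 + x^2) ≤ 1 + x^2/2 := by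
    rw [show (1:ℝ) + x^2/2 = Real.sqrt ((1+x^2/2)^2) from (Real.sqrt_sq (by positivity)).symm]
    exact Real.sqrt_le_sqrt (by nlinarith)
  nlinarith [exp_quad hx]

lemma arsinh_le_two_sqrt {x : ℝ} (hx : 0 ≤ x) : Real.arsinh x ≤ 2 * Real.sqrt x := by
  have hs : 0 ≤ Real.sqrt x := Real.sqrt_nonneg x
  have hsq : Real.sqrt x ^ 2 = x := Real.sq_sqrt hx
  rw [Real.arsinh, Real.log_le_iff_le_exp (by positivity)]
  have h1 : Real.sqrt (1 + x^2) ≤ 1 + x := by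
    rw [show (1:ℝ) + x = Real.sqrt ((1+x)^2) from (Real.sqrt_sq (by positivity)).symm]
    exact Real.sqrt_le_sqrt (by nlinarith)
  have h2 := exp_quad (by positivity : (0:ℝ) ≤ 2 * Real.sqrt x)
  nlinarith [h2]

lemma sqrt_add_sq_le {x y : ℝ} (hx : 0 ≤ x) (hy : 0 ≤ y) :
    Real.sqrt (x^2 + y^2) ≤ x + y := by
  rw [show x + y = Real.sqrt ((x+y)^2) from (Real.sqrt_sq (by positivity)).symm]
  exact Real.sqrt_le_sqrt (by nlinarith)





noncomputable def qK (h r : ℝ) : ℝ :=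
  2 / h * Real.arsinh (h / r) - 2 / h ^ 2 * (Real.sqrt (r ^ 2 + h ^ 2) - r)

noncomputable def Qd (h r : ℝ) : ℝ :=
  ∫ u in (0:ℝ)..1, ∫ v in (0:ℝ)..1, (Real.sqrt (r ^ 2 + h ^ 2 * (u - v) ^ 2))⁻¹

lemma sqrt_aux {h r x : ℝ} (hh : 0 < h) (hr : 0 < r) :
    Real.sqrt (1 + (h * x / r) ^ 2) = Real.sqrt (r ^ 2 + h ^ 2 * x ^ 2) / r := by
  rw [show (1 + (h * x / r) ^ 2) = (r ^ 2 + h ^ 2 * x ^ 2) / r ^ 2 by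
    field_simp]
  rw [Real.sqrt_div (by positivity), Real.sqrt_sq hr.le]

lemma cont_integrand {h r : ℝ} (hh : 0 < h) (hr : 0 < r) (u : ℝ) :
    Continuous (fun v : ℝ => (Real.sqrt (r ^ 2 + h ^ 2 * (u - v) ^ 2))⁻¹) := by
  apply Continuous.inv₀
  · exact Real.continuous_sqrt.comp (by continuity)
  · intro v
    exact (Real.sqrt_pos.2 (by positivity)).ne'

lemma inner_int {h r : ℝ} (hh : 0 < h) (hr : 0 < r) (u : ℝ) :
    (∫ v in (0:ℝ)..1, (Real.sqrt (r ^ 2 + h ^ 2 * (u - v) ^ 2))⁻¹)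
      = (Real.arsinh (h * u / r) + Real.arsinh (h * (1 - u) / r)) / h := by
  have key : ∀ v ∈ Set.uIcc (0:ℝ) 1,
      HasDerivAt (fun v => -(Real.arsinh (h * (u - v) / r)) / h)
        ((Real.sqrt (r ^ 2 + h ^ 2 * (u - v) ^ 2))⁻¹) v := by
    intro v _
    have h1 : HasDerivAt (fun v : ℝ => h * (u - v) / r) (h * -1 / r) v := by
      simpa using (((hasDerivAt_id v).const_sub u).const_mul h).div_const r
    have h2 := (Real.hasDerivAt_arsinh (h * (u - v) / r)).comp v h1
    have h3 := (h2.neg).div_const h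
    refine h3.congr_deriv ?_
    rw [sqrt_aux hh hr]
    have hs : 0 < Real.sqrt (r ^ 2 + h ^ 2 * (u - v) ^ 2) := Real.sqrt_pos.2 (by positivity)
    field_simp
  rw [intervalIntegral.integral_eq_sub_of_hasDerivAt key
    ((cont_integrand hh hr u).intervalIntegrable 0 1)]
  have e1 : h * (u - 1) / r = -(h * (1 - u) / r) := by ring
  rw [e1, Real.arsinh_neg]
  simp only [sub_zero]
  ring

lemma Qd_eq {h r : ℝ} (hh : 0 < h) (hr : 0 < r) : Qd h r = qK h r := by
  have step1 : Qd h r = ∫ u in (0:ℝ)..1,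
      (Real.arsinh (h * u / r) + Real.arsinh (h * (1 - u) / r)) / h := by
    unfold Qd
    apply intervalIntegral.integral_congr
    intro u _
    exact inner_int hh hr u
  rw [step1]
  have key : ∀ u ∈ Set.uIcc (0:ℝ) 1,
      HasDerivAt (fun u =>
        ((u * Real.arsinh (h * u / r) - Real.sqrt (r ^ 2 + h ^ 2 * u ^ 2) / h)
          - ((1 - u) * Real.arsinh (h * (1 - u) / r)
              - Real.sqrt (r ^ 2 + h ^ 2 * (1 - u) ^ 2) / h)) / h)
        ((Real.arsinh (h * u / r) + Real.arsinh (h * (1 - u) / r)) / h) u := by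
    intro u _
    have hsu : 0 < Real.sqrt (r ^ 2 + h ^ 2 * u ^ 2) := Real.sqrt_pos.2 (by positivity)
    have hsv : 0 < Real.sqrt (r ^ 2 + h ^ 2 * (1 - u) ^ 2) := Real.sqrt_pos.2 (by positivity)
    -- derivative of u * arsinh (h*u/r)
    have d1 : HasDerivAt (fun u : ℝ => h * u / r) (h / r) u := by
      simpa using ((hasDerivAt_id u).const_mul h).div_const r
    have d2 := (Real.hasDerivAt_arsinh (h * u / r)).comp u d1
    have d3 := (hasDerivAt_id u).mul d2
    -- derivative of sqrt (r^2 + h^2 u^2) / h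
    have d4 : HasDerivAt (fun u : ℝ => r ^ 2 + h ^ 2 * u ^ 2) (h ^ 2 * (2 * u)) u := by
      simpa using ((hasDerivAt_pow 2 u).const_mul (h ^ 2)).const_add (r ^ 2)
    have d5 := (d4.sqrt (by positivity)).div_const h
    -- derivative of (1-u) * arsinh (h*(1-u)/r)
    have e1 : HasDerivAt (fun u : ℝ => h * (1 - u) / r) (h * -1 / r) u := by
      simpa using (((hasDerivAt_id u).const_sub 1).const_mul h).div_const r
    have e2 := (Real.hasDerivAt_arsinh (h * (1 - u) / r)).comp u e1
    have e3 := ((hasDerivAt_id u).const_sub 1).mul e2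
    have e4 : HasDerivAt (fun u : ℝ => r ^ 2 + h ^ 2 * (1 - u) ^ 2)
        (h ^ 2 * (2 * (1 - u) * (0 - 1))) u := by
      have := ((((hasDerivAt_id u).const_sub 1).pow 2).const_mul (h ^ 2)).const_add (r ^ 2)
      simpa using this
    have e5 := (e4.sqrt (by positivity)).div_const h
    have dd := (((d3.sub d5).sub (e3.sub e5)).div_const h)
    refine dd.congr_deriv ?_
    simp only [Function.comp_apply, id]
    rw [sqrt_aux hh hr, sqrt_aux hh hr]
    field_simp
    ring
  have hcont : IntervalIntegrable
      (fun u => (Real.arsinh (h * u / r) + Real.arsinh (h * (1 - u) / r)) / h)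
      volume 0 1 := by
    apply Continuous.intervalIntegrable
    exact (((continuous_arsinh.comp (by continuity)).add
      (continuous_arsinh.comp (by continuity))).div_const h)
  rw [intervalIntegral.integral_eq_sub_of_hasDerivAt key hcont]
  have h0 : Real.sqrt (r ^ 2 + h ^ 2 * (0:ℝ) ^ 2) = r := by
    simp [Real.sqrt_sq hr.le]
  have h1 : Real.sqrt (r ^ 2 + h ^ 2 * (1 - (0:ℝ)) ^ 2) = Real.sqrt (r ^ 2 + h ^ 2) := by
    norm_num
  have h2 : Real.sqrt (r ^ 2 + h ^ 2 * (1:ℝ) ^ 2) = Real.sqrt (r ^ 2 + h ^ 2) := by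
    norm_num
  have h3 : Real.sqrt (r ^ 2 + h ^ 2 * (1 - (1:ℝ)) ^ 2) = r := by
    simp [Real.sqrt_sq hr.le]
  have h4 : h * (1 - (1:ℝ)) / r = 0 := by ring
  have h5 : h * (0:ℝ) / r = 0 := by ring
  simp only [h0, h1, h2, h3, h4, h5, Real.arsinh_zero]
  unfold qK
  field_simp
  ring





lemma Qd_nonneg (h r : ℝ) : 0 ≤ Qd h r := by
  apply intervalIntegral.integral_nonneg (by norm_num)
  intro u _
  apply intervalIntegral.integral_nonneg (by norm_num)
  intro v _
  positivity

lemma inner_cont {h r : ℝ} (hh : 0 < h) (hr : 0 < r) :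
    Continuous (fun u : ℝ => (Real.arsinh (h * u / r) + Real.arsinh (h * (1 - u) / r)) / h) :=
  ((continuous_arsinh.comp (by continuity)).add (continuous_arsinh.comp (by continuity))).div_const h

lemma Qd_le_inv {h r : ℝ} (hh : 0 < h) (hr : 0 < r) : Qd h r ≤ 1 / r := by
  have inner_le : ∀ u ∈ Set.Icc (0:ℝ) 1,
      (∫ v in (0:ℝ)..1, (Real.sqrt (r ^ 2 + h ^ 2 * (u - v) ^ 2))⁻¹) ≤ 1 / r := by
    intro u _
    calc (∫ v in (0:ℝ)..1, (Real.sqrt (r ^ 2 + h ^ 2 * (u - v) ^ 2))⁻¹)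
        ≤ ∫ v in (0:ℝ)..1, 1 / r := by
          apply intervalIntegral.integral_mono_on (by norm_num)
            ((cont_integrand hh hr u).intervalIntegrable 0 1)
            (intervalIntegrable_const)
          intro v _
          rw [one_div]
          apply inv_anti₀ hr
          calc r = Real.sqrt (r ^ 2) := (Real.sqrt_sq hr.le).symm
          _ ≤ _ := Real.sqrt_le_sqrt (by nlinarith)
      _ = 1 / r := by simp
  calc Qd h r ≤ ∫ u in (0:ℝ)..1, 1 / r := by
        apply intervalIntegral.integral_mono_on (by norm_num) _ intervalIntegrable_const inner_le
        · have e : (fun u : ℝ => ∫ v in (0:ℝ)..1, (Real.sqrt (r ^ 2 + h ^ 2 * (u - v) ^ 2))⁻¹)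
              = fun u => (Real.arsinh (h * u / r) + Real.arsinh (h * (1 - u) / r)) / h :=
            funext fun u => inner_int hh hr u
          show IntervalIntegrable (fun u : ℝ =>
            ∫ v in (0:ℝ)..1, (Real.sqrt (r ^ 2 + h ^ 2 * (u - v) ^ 2))⁻¹) volume 0 1
          rw [e]
          exact (inner_cont hh hr).intervalIntegrable 0 1
    _ = 1 / r := by simp

/-- scaling comparison: if `d ≤ c * r` with `c ≥ 1` then `Qd h r ≤ c * Qd h d`. -/
lemma Qd_scale {h r d c : ℝ} (hh : 0 < h) (hr : 0 < r) (hd : 0 < d)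
    (hc : 1 ≤ c) (hcd : d ≤ c * r) : Qd h r ≤ c * Qd h d := by
  have hc0 : 0 < c := lt_of_lt_of_le one_pos hc
  have ptwise : ∀ u v : ℝ, (Real.sqrt (r ^ 2 + h ^ 2 * (u - v) ^ 2))⁻¹
      ≤ c * (Real.sqrt (d ^ 2 + h ^ 2 * (u - v) ^ 2))⁻¹ := by
    intro u v
    have hsr : 0 < Real.sqrt (r ^ 2 + h ^ 2 * (u - v) ^ 2) := Real.sqrt_pos.2 (by positivity)
    have hsd : 0 < Real.sqrt (d ^ 2 + h ^ 2 * (u - v) ^ 2) := Real.sqrt_pos.2 (by positivity)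
    have key : Real.sqrt (d ^ 2 + h ^ 2 * (u - v) ^ 2)
        ≤ c * Real.sqrt (r ^ 2 + h ^ 2 * (u - v) ^ 2) := by
      have : c * Real.sqrt (r ^ 2 + h ^ 2 * (u - v) ^ 2)
          = Real.sqrt (c ^ 2 * (r ^ 2 + h ^ 2 * (u - v) ^ 2)) := by
        rw [Real.sqrt_mul (by positivity), Real.sqrt_sq hc0.le]
      rw [this]
      apply Real.sqrt_le_sqrt
      have hd2 : d ^ 2 ≤ c ^ 2 * r ^ 2 := by nlinarith
      have hc2 : (1:ℝ) ≤ c ^ 2 := by nlinarith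
      nlinarith [mul_le_mul_of_nonneg_right hc2 (by positivity : (0:ℝ) ≤ h ^ 2 * (u - v) ^ 2)]
    have e : c * (Real.sqrt (d ^ 2 + h ^ 2 * (u - v) ^ 2))⁻¹
        = (Real.sqrt (d ^ 2 + h ^ 2 * (u - v) ^ 2) / c)⁻¹ := by
      field_simp
    rw [e]
    apply inv_anti₀ (by positivity)
    rw [div_le_iff₀ hc0]
    linarith [key]
  have inner_le : ∀ u ∈ Set.Icc (0:ℝ) 1,
      (∫ v in (0:ℝ)..1, (Real.sqrt (r ^ 2 + h ^ 2 * (u - v) ^ 2))⁻¹)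
        ≤ c * ∫ v in (0:ℝ)..1, (Real.sqrt (d ^ 2 + h ^ 2 * (u - v) ^ 2))⁻¹ := by
    intro u _
    rw [← intervalIntegral.integral_const_mul]
    apply intervalIntegral.integral_mono_on (by norm_num)
      ((cont_integrand hh hr u).intervalIntegrable 0 1)
      ((continuous_const.mul (cont_integrand hh hd u)).intervalIntegrable 0 1)
    intro v _
    exact ptwise u v
  have e1 : (fun u : ℝ => ∫ v in (0:ℝ)..1, (Real.sqrt (r ^ 2 + h ^ 2 * (u - v) ^ 2))⁻¹)
      = fun u => (Real.arsinh (h * u / r) + Real.arsinh (h * (1 - u) / r)) / h :=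
    funext fun u => inner_int hh hr u
  have e2 : (fun u : ℝ => ∫ v in (0:ℝ)..1, (Real.sqrt (d ^ 2 + h ^ 2 * (u - v) ^ 2))⁻¹)
      = fun u => (Real.arsinh (h * u / d) + Real.arsinh (h * (1 - u) / d)) / h :=
    funext fun u => inner_int hh hd u
  unfold Qd
  rw [← intervalIntegral.integral_const_mul]
  apply intervalIntegral.integral_mono_on (by norm_num)
  · show IntervalIntegrable (fun u : ℝ =>
      ∫ v in (0:ℝ)..1, (Real.sqrt (r ^ 2 + h ^ 2 * (u - v) ^ 2))⁻¹) volume 0 1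
    rw [e1]
    exact (inner_cont hh hr).intervalIntegrable 0 1
  · show IntervalIntegrable (fun u : ℝ =>
      c * ∫ v in (0:ℝ)..1, (Real.sqrt (d ^ 2 + h ^ 2 * (u - v) ^ 2))⁻¹) volume 0 1
    have e3 : (fun u : ℝ => c * ∫ v in (0:ℝ)..1, (Real.sqrt (d ^ 2 + h ^ 2 * (u - v) ^ 2))⁻¹)
        = fun u => c * ((Real.arsinh (h * u / d) + Real.arsinh (h * (1 - u) / d)) / h) := by
      funext u
      exact congrArg (fun z => c * z) (inner_int hh hd u)
    rw [e3]
    exact (continuous_const.mul (inner_cont hh hd)).intervalIntegrable 0 1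
  · exact inner_le





lemma aux2 {x y : ℝ} (hy : 0 < y) :
    Real.sqrt (1 + (x / y) ^ 2) = Real.sqrt (y ^ 2 + x ^ 2) / y := by
  rw [show (1 + (x / y) ^ 2) = (y ^ 2 + x ^ 2) / y ^ 2 by field_simp]
  rw [Real.sqrt_div (by positivity), Real.sqrt_sq hy.le]

lemma qK_abs_le {h σ : ℝ} (hh : 0 < h) (hs : 0 < σ) :
    |qK h σ| ≤ 4 / Real.sqrt h * σ ^ (-(1:ℝ)/2) + 2 / h := by
  have h1 : 0 ≤ 2 / h * Real.arsinh (h / σ) := by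
    have := Real.arsinh_nonneg_iff.2 (by positivity : (0:ℝ) ≤ h / σ)
    positivity
  have h2 : 2 / h * Real.arsinh (h / σ) ≤ 4 / Real.sqrt h * σ ^ (-(1:ℝ)/2) := by
    have b1 : Real.arsinh (h / σ) ≤ 2 * Real.sqrt (h / σ) := arsinh_le_two_sqrt (by positivity)
    have b2 : Real.sqrt (h / σ) = Real.sqrt h / Real.sqrt σ := Real.sqrt_div hh.le σ
    have b3 : σ ^ (-(1:ℝ)/2) = (Real.sqrt σ)⁻¹ := by
      rw [show (-(1:ℝ)/2) = -(1/2 : ℝ) by norm_num, Real.rpow_neg hs.le, Real.sqrt_eq_rpow]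
    rw [b3]
    have hsh : 0 < Real.sqrt h := Real.sqrt_pos.2 hh
    have hss : 0 < Real.sqrt σ := Real.sqrt_pos.2 hs
    calc 2 / h * Real.arsinh (h / σ) ≤ 2 / h * (2 * (Real.sqrt h / Real.sqrt σ)) := by
          apply mul_le_mul_of_nonneg_left _ (by positivity)
          rw [b2] at b1; exact b1
      _ = 4 / Real.sqrt h * (Real.sqrt σ)⁻¹ := by
          field_simp
          linear_combination 4 * Real.mul_self_sqrt hh.le
  have hsle : σ ≤ Real.sqrt (σ ^ 2 + h ^ 2) := by
    have := Real.sqrt_le_sqrt (by nlinarith : σ ^ 2 ≤ σ ^ 2 + h ^ 2)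
    rwa [Real.sqrt_sq hs.le] at this
  have h3 : 0 ≤ 2 / h ^ 2 * (Real.sqrt (σ ^ 2 + h ^ 2) - σ) :=
    mul_nonneg (by positivity) (by linarith)
  have h4 : 2 / h ^ 2 * (Real.sqrt (σ ^ 2 + h ^ 2) - σ) ≤ 2 / h := by
    have : Real.sqrt (σ ^ 2 + h ^ 2) ≤ σ + h := sqrt_add_sq_le hs.le hh.le
    have e : 2 / h = 2 / h ^ 2 * h := by field_simp
    rw [e]
    apply mul_le_mul_of_nonneg_left (by linarith) (by positivity)
  rw [abs_le]
  constructor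
  · unfold qK
    have : (0:ℝ) ≤ 4 / Real.sqrt h * σ ^ (-(1:ℝ)/2) := by
      have : (0:ℝ) < Real.sqrt h := Real.sqrt_pos.2 hh
      have : (0:ℝ) ≤ σ ^ (-(1:ℝ)/2) := Real.rpow_nonneg hs.le _
      positivity
    linarith
  · unfold qK
    linarith

lemma qK_integrable {h a : ℝ} (hh : 0 < h) (ha : 0 < a) :
    IntervalIntegrable (qK h) volume 0 a := by
  have hg : IntervalIntegrable (fun σ : ℝ => 4 / Real.sqrt h * σ ^ (-(1:ℝ)/2) + 2 / h)
      volume 0 a :=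
    ((intervalIntegral.intervalIntegrable_rpow' (by norm_num)).const_mul _).add intervalIntegrable_const
  apply IntervalIntegrable.mono_fun' hg
  · have hc : ContinuousOn (qK h) (Set.Ioc 0 a) := by
      apply ContinuousOn.sub
      · apply ContinuousOn.mul continuousOn_const
        apply ContinuousOn.arsinh
        exact continuousOn_const.div continuousOn_id (fun x hx => ne_of_gt hx.1)
      · exact continuousOn_const.mul
          (((Real.continuous_sqrt.comp (by continuity)).continuousOn).sub continuousOn_id)
    have := hc.aestronglyMeasurable (μ := volume) measurableSet_Ioc
    rwa [Set.uIoc_of_le ha.le]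
  · rw [Set.uIoc_of_le ha.le]
    filter_upwards [MeasureTheory.ae_restrict_mem measurableSet_Ioc] with σ hσ
    calc ‖qK h σ‖ = |qK h σ| := rfl
      _ ≤ _ := qK_abs_le hh hσ.1





noncomputable def Phi (h σ : ℝ) : ℝ :=
  2 / h * (σ * Real.arsinh (h / σ)) + Real.arsinh (σ / h)
    + (σ ^ 2 - σ * Real.sqrt (σ ^ 2 + h ^ 2)) / h ^ 2

lemma Phi_deriv {h a σ : ℝ} (hh : 0 < h) (hσ : 0 < σ) :
    HasDerivAt (Phi h) (qK h σ) σ := by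
  have hs0 : 0 < Real.sqrt (σ ^ 2 + h ^ 2) := Real.sqrt_pos.2 (by positivity)
  have hs2 : Real.sqrt (σ ^ 2 + h ^ 2) ^ 2 = σ ^ 2 + h ^ 2 :=
    Real.sq_sqrt (by positivity)
  -- derivative of σ * arsinh (h/σ)
  have ddiv : HasDerivAt (fun x : ℝ => h / x) (-(h / σ ^ 2)) σ := by
    have := (hasDerivAt_inv (ne_of_gt hσ)).const_mul h
    refine this.congr_deriv ?_
    field_simp
  have d1' := (hasDerivAt_id σ).mul ((Real.hasDerivAt_arsinh (h / σ)).comp σ ddiv)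
  have d1 : HasDerivAt (fun σ => σ * Real.arsinh (h / σ))
      (Real.arsinh (h / σ) - h / Real.sqrt (σ ^ 2 + h ^ 2)) σ := by
    refine d1'.congr_deriv ?_
    simp only [Function.comp_apply, id]
    rw [aux2 hσ]
    field_simp
    ring
  have d2' := (Real.hasDerivAt_arsinh (σ / h)).comp σ ((hasDerivAt_id σ).div_const h)
  have d2 : HasDerivAt (fun σ => Real.arsinh (σ / h)) ((Real.sqrt (σ ^ 2 + h ^ 2))⁻¹) σ := by
    refine d2'.congr_deriv ?_
    rw [aux2 hh]
    rw [show h ^ 2 + σ ^ 2 = σ ^ 2 + h ^ 2 from add_comm _ _]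
    field_simp
  have d3' : HasDerivAt (fun σ : ℝ => σ ^ 2 + h ^ 2) (2 * σ) σ := by
    simpa using (hasDerivAt_pow 2 σ).add_const (h ^ 2)
  have d4' := (hasDerivAt_id σ).mul (d3'.sqrt (by positivity : σ ^ 2 + h ^ 2 ≠ 0))
  have d5' := ((hasDerivAt_pow 2 σ).sub d4').div_const (h ^ 2)
  have d5 : HasDerivAt (fun σ : ℝ => (σ ^ 2 - σ * Real.sqrt (σ ^ 2 + h ^ 2)) / h ^ 2)
      ((2 * σ - (Real.sqrt (σ ^ 2 + h ^ 2) + σ ^ 2 / Real.sqrt (σ ^ 2 + h ^ 2))) / h ^ 2)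
      σ := by
    refine d5'.congr_deriv ?_
    simp only [Function.comp_apply, id]
    field_simp
    ring
  have dd := ((d1.const_mul (2 / h)).add d2).add d5
  have : HasDerivAt (Phi h)
      (2 / h * (Real.arsinh (h / σ) - h / Real.sqrt (σ ^ 2 + h ^ 2))
        + (Real.sqrt (σ ^ 2 + h ^ 2))⁻¹
        + (2 * σ - (Real.sqrt (σ ^ 2 + h ^ 2) + σ ^ 2 / Real.sqrt (σ ^ 2 + h ^ 2))) / h ^ 2)
      σ := dd
  convert this using 1
  unfold qK
  field_simp
  linear_combination (-1 : ℝ) * hs2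

lemma Phi_zero {h : ℝ} : Phi h 0 = 0 := by
  unfold Phi
  simp

lemma Phi_cont {h a : ℝ} (hh : 0 < h) (ha : 0 < a) :
    ContinuousOn (Phi h) (Set.Icc 0 a) := by
  have hrest : Continuous (fun σ : ℝ => Real.arsinh (σ / h)
      + (σ ^ 2 - σ * Real.sqrt (σ ^ 2 + h ^ 2)) / h ^ 2) := by
    apply Continuous.add
    · exact continuous_arsinh.comp (continuous_id.div_const h)
    · apply Continuous.div_const
      exact (continuous_pow 2).sub (continuous_id.mul (Real.continuous_sqrt.comp (by continuity)))
  have hT : ContinuousOn (fun σ : ℝ => σ * Real.arsinh (h / σ)) (Set.Icc 0 a) := by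
    intro x hx
    rcases eq_or_lt_of_le hx.1 with h0 | h0
    · -- x = 0
      rw [← h0]
      have hT0 : (fun σ : ℝ => σ * Real.arsinh (h / σ)) 0 = 0 := by simp
      unfold ContinuousWithinAt
      rw [hT0]
      apply squeeze_zero' (g := fun σ : ℝ => 2 * Real.sqrt h * Real.sqrt σ)
      · filter_upwards [self_mem_nhdsWithin] with σ hσ
        exact mul_nonneg hσ.1 (Real.arsinh_nonneg_iff.2 (div_nonneg hh.le hσ.1))
      · filter_upwards [self_mem_nhdsWithin] with σ hσ
        rcases eq_or_lt_of_le hσ.1 with hσ0 | hσ0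
        · rw [← hσ0]; simp
        · calc σ * Real.arsinh (h / σ) ≤ σ * (2 * Real.sqrt (h / σ)) :=
                mul_le_mul_of_nonneg_left (arsinh_le_two_sqrt (by positivity)) hσ.1
            _ = 2 * Real.sqrt h * Real.sqrt σ := by
                rw [Real.sqrt_div hh.le]
                rw [show σ * (2 * (Real.sqrt h / Real.sqrt σ))
                  = 2 * Real.sqrt h * (σ / Real.sqrt σ) by ring]
                rw [Real.div_sqrt]
      · have hg : Continuous (fun σ : ℝ => 2 * Real.sqrt h * Real.sqrt σ) := by
          exact continuous_const.mul Real.continuous_sqrt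
        have := (hg.tendsto 0).mono_left (nhdsWithin_le_nhds (s := Set.Icc 0 a))
        simpa using this
    · exact (continuousAt_id.mul ((continuous_arsinh.continuousAt).comp
        (continuousAt_const.div continuousAt_id h0.ne'))).continuousWithinAt
  have : Phi h = fun σ => 2 / h * (σ * Real.arsinh (h / σ))
      + (Real.arsinh (σ / h) + (σ ^ 2 - σ * Real.sqrt (σ ^ 2 + h ^ 2)) / h ^ 2) := by
    funext σ; unfold Phi; ring
  rw [this]
  exact (hT.const_smul (2 / h)).add hrest.continuousOn

lemma qK_integral {h a : ℝ} (hh : 0 < h) (ha : 0 < a) :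
    ∫ σ in (0:ℝ)..a, qK h σ
      = 2 / h * (a * Real.arsinh (h / a)) + Real.arsinh (a / h)
        + (a ^ 2 - a * Real.sqrt (a ^ 2 + h ^ 2)) / h ^ 2 := by
  have := intervalIntegral.integral_eq_sub_of_hasDeriv_right_of_le ha.le
    (Phi_cont hh ha)
    (fun x hx => (Phi_deriv (a := a) hh hx.1).hasDerivWithinAt)
    (qK_integrable hh ha)
  rw [this, Phi_zero]
  unfold Phi
  ring

lemma main_est {a h : ℝ} (ha : 0 < a) (hh : 0 < h) (hh2 : h ≤ 1/2) :
    |(∫ σ in (0:ℝ)..a, qK h σ) - Real.log (1/h)|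
      ≤ 3 + |Real.log (2*a)| + |Real.log (2*a+1)| := by
  rw [qK_integral hh ha]
  set s := Real.sqrt (a ^ 2 + h ^ 2) with hs_def
  have hs_lb : a ≤ s := by
    have := Real.sqrt_le_sqrt (by nlinarith : a ^ 2 ≤ a ^ 2 + h ^ 2)
    rwa [Real.sqrt_sq ha.le] at this
  have hs0 : 0 < s := lt_of_lt_of_le ha hs_lb
  have hs_ub : s ≤ a + h := sqrt_add_sq_le ha.le hh.le
  have hs_ub2 : s ≤ a + h ^ 2 / (2 * a) := by
    rw [hs_def]
    have h2ad : 2 * a * (h ^ 2 / (2 * a)) = h ^ 2 := by field_simp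
    have : a ^ 2 + h ^ 2 ≤ (a + h ^ 2 / (2 * a)) ^ 2 := by
      nlinarith [sq_nonneg (h ^ 2 / (2 * a)), h2ad]
    calc Real.sqrt (a ^ 2 + h ^ 2) ≤ Real.sqrt ((a + h ^ 2 / (2 * a)) ^ 2) :=
          Real.sqrt_le_sqrt this
      _ = a + h ^ 2 / (2 * a) := Real.sqrt_sq (by positivity)
  -- the identity for arsinh (a/h)
  have hid : Real.arsinh (a / h) = Real.log (1 / h) + Real.log (a + s) := by
    rw [Real.arsinh, aux2 hh]
    rw [show h ^ 2 + a ^ 2 = a ^ 2 + h ^ 2 from add_comm _ _]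
    rw [show a / h + Real.sqrt (a ^ 2 + h ^ 2) / h = (a + s) / h from by rw [hs_def]; ring]
    rw [Real.log_div (by positivity) (ne_of_gt hh), Real.log_div (by norm_num) (ne_of_gt hh)]
    rw [Real.log_one]
    ring
  -- term 1
  have ht1a : 0 ≤ 2 / h * (a * Real.arsinh (h / a)) := by
    have := Real.arsinh_nonneg_iff.2 (by positivity : (0:ℝ) ≤ h / a)
    positivity
  have ht1b : 2 / h * (a * Real.arsinh (h / a)) ≤ 2 := by
    have := arsinh_le_self (by positivity : (0:ℝ) ≤ h / a)
    calc 2 / h * (a * Real.arsinh (h / a)) ≤ 2 / h * (a * (h / a)) := by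
          apply mul_le_mul_of_nonneg_left _ (by positivity)
          exact mul_le_mul_of_nonneg_left this ha.le
      _ = 2 := by field_simp
  -- term 3
  have ht3a : (a ^ 2 - a * s) / h ^ 2 ≤ 0 := by
    apply div_nonpos_of_nonpos_of_nonneg _ (by positivity)
    nlinarith
  have ht3b : -(1/2 : ℝ) ≤ (a ^ 2 - a * s) / h ^ 2 := by
    rw [le_div_iff₀ (by positivity : (0:ℝ) < h ^ 2)]
    have had : a * (h ^ 2 / (2 * a)) = h ^ 2 / 2 := by
      field_simp
    nlinarith [mul_le_mul_of_nonneg_left hs_ub2 ha.le, had]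
  -- term 2
  have ht2a : Real.log (2 * a) ≤ Real.log (a + s) :=
    Real.log_le_log (by positivity) (by linarith)
  have ht2b : Real.log (a + s) ≤ Real.log (2 * a + 1) :=
    Real.log_le_log (by positivity) (by linarith)
  have habs1 := le_abs_self (Real.log (2 * a))
  have habs2 := le_abs_self (Real.log (2 * a + 1))
  have habs3 := neg_abs_le (Real.log (2 * a))
  have habs4 := neg_abs_le (Real.log (2 * a + 1))
  rw [hid]
  rw [abs_le]
  constructor <;> nlinarith




variable {L : ℝ} {γ γ' : ℝ → EuclideanSpace ℝ (Fin 2)}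

lemma gamma_cont (hderiv : ∀ t, HasDerivAt γ (γ' t) t) : Continuous γ :=
  continuous_iff_continuousAt.2 fun t => (hderiv t).continuousAt

lemma gamma_lip (hderiv : ∀ t, HasDerivAt γ (γ' t) t) (hunit : ∀ t, ‖γ' t‖ = 1) :
    ∀ a b : ℝ, ‖γ a - γ b‖ ≤ |a - b| := by
  have hlip : LipschitzWith 1 γ := by
    apply lipschitzWith_of_nnnorm_deriv_le (fun t => (hderiv t).differentiableAt)
    intro x
    have : deriv γ x = γ' x := (hderiv x).deriv
    rw [this]
    simp only [← NNReal.coe_le_coe, coe_nnnorm, NNReal.coe_one]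
    rw [hunit x]
  intro a b
  have := hlip.dist_le_mul a b
  rw [dist_eq_norm, Real.dist_eq] at this
  simpa using this

lemma gamma_taylor (hderiv : ∀ t, HasDerivAt γ (γ' t) t) (hunit : ∀ t, ‖γ' t‖ = 1)
    {Λ : ℝ} (hΛ : ∀ x y, ‖γ' x - γ' y‖ ≤ Λ * |x - y|) :
    ∀ t σ : ℝ, 0 ≤ σ → σ - Λ * σ ^ 2 / 2 ≤ ‖γ (t + σ) - γ t‖ := by
  intro t σ hσ
  -- φ x = ⟪γ (t+x) - γ t, γ' t⟫ - (x - Λ x²/2) is monotone on [0, ∞)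
  set φ : ℝ → ℝ := fun x => ⟪γ (t + x) - γ t, γ' t⟫ - (x - Λ * x ^ 2 / 2) with hφ
  have hD : ∀ x : ℝ, HasDerivAt φ (⟪γ' (t + x), γ' t⟫ - (1 - Λ * x)) x := by
    intro x
    have h1 : HasDerivAt (fun x : ℝ => γ (t + x)) (γ' (t + x)) x := by
      have := (hderiv (t + x)).scomp x ((hasDerivAt_id x).const_add t)
      rw [one_smul] at this
      exact this
    have h2 : HasDerivAt (fun x : ℝ => γ (t + x) - γ t) (γ' (t + x)) x := h1.sub_const (γ t)
    have h3 : HasDerivAt (fun x : ℝ => (γ' t : EuclideanSpace ℝ (Fin 2)))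
        (0 : EuclideanSpace ℝ (Fin 2)) x := hasDerivAt_const x _
    have h4 := HasDerivAt.inner ℝ h2 h3
    have h5 : HasDerivAt (fun x : ℝ => x - Λ * x ^ 2 / 2) (1 - Λ * (2 * x) / 2) x := by
      have := (hasDerivAt_id x).sub (((hasDerivAt_pow 2 x).const_mul Λ).div_const 2)
      refine this.congr_deriv ?_
      norm_num
    have h6 := h4.sub h5
    refine h6.congr_deriv ?_
    simp [inner_zero_right]
    ring
  have hmono : MonotoneOn φ (Set.Ici 0) := by
    apply monotoneOn_of_deriv_nonneg (convex_Ici 0)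
    · exact Continuous.continuousOn (continuous_iff_continuousAt.2 fun x => (hD x).continuousAt)
    · intro x _
      exact (hD x).differentiableAt.differentiableWithinAt
    · intro x hx
      rw [interior_Ici] at hx
      rw [(hD x).deriv]
      have hip : ⟪γ' t - γ' (t + x), γ' t⟫ ≤ Λ * x := by
        calc ⟪γ' t - γ' (t + x), γ' t⟫ ≤ ‖γ' t - γ' (t + x)‖ * ‖γ' t‖ := real_inner_le_norm _ _
          _ ≤ Λ * x := by
              rw [hunit t, mul_one]
              have := hΛ t (t + x)
              rw [show t - (t + x) = -x by ring, abs_neg, abs_of_pos hx] at this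
              exact this
      have hexp : ⟪γ' (t + x), γ' t⟫ = 1 - ⟪γ' t - γ' (t + x), γ' t⟫ := by
        rw [inner_sub_left, real_inner_self_eq_norm_sq, hunit t]
        ring
      rw [hexp]
      linarith
  have h0 : φ 0 = 0 := by simp [hφ]
  have := hmono (Set.self_mem_Ici) (Set.mem_Ici.2 hσ) hσ
  rw [h0] at this
  have hineq : ⟪γ (t + σ) - γ t, γ' t⟫ ≤ ‖γ (t + σ) - γ t‖ := by
    calc ⟪γ (t + σ) - γ t, γ' t⟫ ≤ ‖γ (t + σ) - γ t‖ * ‖γ' t‖ := real_inner_le_norm _ _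
      _ = ‖γ (t + σ) - γ t‖ := by rw [hunit t, mul_one]
  simp only [hφ] at this
  linarith





variable {L : ℝ} {γ γ' : ℝ → EuclideanSpace ℝ (Fin 2)}

lemma reduce (hper : ∀ t, γ (t + L) = γ t) (hL : 0 < L) (t : ℝ) :
    ∃ t₀, t₀ ∈ Set.Ico 0 L ∧ ∀ x, γ (t₀ + x) = γ (t + x) := by
  have hp : Function.Periodic γ L := hper
  refine ⟨t - ⌊t / L⌋ * L, ⟨?_, ?_⟩, ?_⟩
  · have := Int.fract_nonneg (t / L)
    have e : t - ⌊t / L⌋ * L = L * Int.fract (t / L) := by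
      rw [Int.fract]
      field_simp
    rw [e]
    positivity
  · have h1 := Int.fract_lt_one (t / L)
    have e : t - ⌊t / L⌋ * L = L * Int.fract (t / L) := by
      rw [Int.fract]; field_simp
    rw [e]
    calc L * Int.fract (t / L) < L * 1 := by
          exact mul_lt_mul_of_pos_left h1 hL
      _ = L := mul_one L
  · intro x
    have := hp.sub_int_mul_eq (x := t + x) ⌊t / L⌋
    rw [show t + x - ⌊t / L⌋ * L = t - ⌊t / L⌋ * L + x by ring] at this
    exact this

lemma gamma_ne (hper : ∀ t, γ (t + L) = γ t) (hL : 0 < L)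
    (hinj : Set.InjOn γ (Set.Ico 0 L)) :
    ∀ t σ : ℝ, 0 < σ → σ < L → γ (t + σ) ≠ γ t := by
  intro t σ hσ0 hσL hne
  obtain ⟨t₀, ht₀, hred⟩ := reduce hper hL t
  have h1 : γ (t₀ + σ) = γ t₀ := by
    have e0 := hred 0
    simp only [add_zero] at e0
    rw [hred σ, hne, ← e0]
  rcases lt_or_ge (t₀ + σ) L with hlt | hge
  · have := hinj ⟨by linarith [ht₀.1], hlt⟩ ht₀ h1
    linarith
  · have h2 : γ (t₀ + σ - L) = γ t₀ := by
      rw [← h1, ← hper (t₀ + σ - L), sub_add_cancel]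
    have hmem : t₀ + σ - L ∈ Set.Ico 0 L := by
      constructor
      · linarith
      · have := ht₀.2; linarith
    have := hinj hmem ht₀ h2
    linarith

lemma gamma_min (hper : ∀ t, γ (t + L) = γ t) (hL : 0 < L)
    (hinj : Set.InjOn γ (Set.Ico 0 L))
    (hcont : Continuous γ) {δ : ℝ} (hδ0 : 0 < δ) (hδL : 2 * δ ≤ L) :
    ∃ c₀ : ℝ, 0 < c₀ ∧ ∀ t σ : ℝ, δ ≤ σ → σ ≤ L - δ → c₀ ≤ ‖γ (t + σ) - γ t‖ := by
  set G : ℝ × ℝ → ℝ := fun p => ‖γ (p.1 + p.2) - γ p.1‖ with hG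
  have hGcont : Continuous G := by
    apply Continuous.norm
    exact (hcont.comp (continuous_fst.add continuous_snd)).sub (hcont.comp continuous_fst)
  have hK : IsCompact ((Set.Icc (0:ℝ) L) ×ˢ (Set.Icc δ (L - δ))) :=
    isCompact_Icc.prod isCompact_Icc
  have hne : ((Set.Icc (0:ℝ) L) ×ˢ (Set.Icc δ (L - δ))).Nonempty :=
    ⟨(0, δ), by constructor <;> (constructor <;> [skip; skip]) <;> simp <;> linarith⟩
  obtain ⟨p, hpK, hmin⟩ := hK.exists_isMinOn hne hGcont.continuousOn
  refine ⟨G p, ?_, ?_⟩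
  · rw [hG]
    simp only
    rw [norm_pos_iff, sub_ne_zero]
    apply gamma_ne hper hL hinj
    · have := hpK.2.1; linarith
    · have := hpK.2.2; linarith
  · intro t σ hσ1 hσ2
    obtain ⟨t₀, ht₀, hred⟩ := reduce hper hL t
    have e0 := hred 0
    simp only [add_zero] at e0
    have e : ‖γ (t + σ) - γ t‖ = G (t₀, σ) := by
      rw [hG]
      simp only
      rw [hred σ, ← e0]
    rw [e]
    exact hmin ⟨⟨ht₀.1, le_of_lt (lt_of_lt_of_le ht₀.2 (le_refl L))⟩, ⟨hσ1, hσ2⟩⟩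


lemma qK_contOn {h : ℝ} : ContinuousOn (qK h) {x : ℝ | 0 < x} := by
  apply ContinuousOn.sub
  · apply ContinuousOn.mul continuousOn_const
    apply ContinuousOn.arsinh
    exact continuousOn_const.div continuousOn_id (fun x hx => ne_of_gt hx)
  · apply continuousOn_const.mul
    apply ContinuousOn.sub _ continuousOn_id
    exact (Real.continuous_sqrt.comp ((continuous_pow 2).add continuous_const)).continuousOn

end IK33

/-- Lemma 3.3 of Ignat–Kurzke: for a closed simple unit-speed `C^{1,1}` curve `γ`
of length `L` in the plane, the kernel
`K_h(z) = ∫₀¹∫₀¹ (‖z‖² + h²(u - v)²)^{-1/2} du dv` satisfies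
`|∫₀^L K_h(γ(t) - γ(s)) ds - 2 log(1/h)| ≤ C` uniformly in the base point `t`
and in `h ∈ (0, 1/2]`. -/
theorem stmt_6 (L : ℝ) (hL : 0 < L)
    (γ : ℝ → EuclideanSpace ℝ (Fin 2)) (hper : ∀ t, γ (t + L) = γ t)
    (γ' : ℝ → EuclideanSpace ℝ (Fin 2))
    (hderiv : ∀ t, HasDerivAt γ (γ' t) t)
    (hunit : ∀ t, ‖γ' t‖ = 1)
    (hlip : ∃ Λ : NNReal, LipschitzWith Λ γ')
    (hinj : Set.InjOn γ (Set.Ico 0 L)) :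
    ∃ C : ℝ, 0 < C ∧ ∀ h : ℝ, 0 < h → h ≤ 1 / 2 → ∀ t : ℝ,
      |(∫ s in (0:ℝ)..L,
          ∫ u in (0:ℝ)..1, ∫ v in (0:ℝ)..1,
            (Real.sqrt (‖γ t - γ s‖ ^ 2 + h ^ 2 * (u - v) ^ 2))⁻¹)
        - 2 * Real.log (1 / h)| ≤ C := by
  classical
  obtain ⟨Λ₀, hlip₀⟩ := hlip
  obtain ⟨Λ, hΛ1, hΛ⟩ : ∃ Λ : ℝ, 1 ≤ Λ ∧ ∀ x y : ℝ, ‖γ' x - γ' y‖ ≤ Λ * |x - y| := by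
    have hΛ0nn : (0:ℝ) ≤ (Λ₀ : ℝ) := Λ₀.coe_nonneg
    refine ⟨(Λ₀ : ℝ) + 1, by linarith, ?_⟩
    intro x y
    have h1 := hlip₀.dist_le_mul x y
    rw [dist_eq_norm, Real.dist_eq] at h1
    have h2 : (Λ₀:ℝ) * |x - y| ≤ ((Λ₀:ℝ) + 1) * |x - y| :=
      mul_le_mul_of_nonneg_right (by linarith) (abs_nonneg _)
    linarith
  have hΛpos : (0:ℝ) < Λ := lt_of_lt_of_le one_pos hΛ1
  have hcont := IK33.gamma_cont hderiv
  have hlip1 := IK33.gamma_lip hderiv hunit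
  have hL2 : 0 < L / 2 := by linarith
  set δ : ℝ := min (L / 2) (1 / Λ) with hδdef
  have hδ0 : 0 < δ := lt_min hL2 (by positivity)
  have hδL2 : δ ≤ L / 2 := min_le_left _ _
  have hδΛ : Λ * δ ≤ 1 := by
    have h1 : δ ≤ 1 / Λ := min_le_right _ _
    calc Λ * δ ≤ Λ * (1 / Λ) := mul_le_mul_of_nonneg_left h1 hΛpos.le
      _ = 1 := by field_simp
  obtain ⟨c₀, hc₀, hmin⟩ := IK33.gamma_min hper hL hinj hcont hδ0 (by linarith)
  set C₁ : ℝ := 3 + |Real.log (2 * (L / 2))| + |Real.log (2 * (L / 2) + 1)| with hC₁def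
  have hC₁0 : 0 ≤ C₁ := by positivity
  set c₂ : ℝ := Λ + 1 / c₀ with hc₂def
  have hc₂0 : 0 < c₂ := by positivity
  refine ⟨c₂ * L + 2 * C₁ + 1, by positivity, ?_⟩
  intro h hh hh2 t
  have hIdef : (∫ s in (0:ℝ)..L, ∫ u in (0:ℝ)..1, ∫ v in (0:ℝ)..1,
      (Real.sqrt (‖γ t - γ s‖ ^ 2 + h ^ 2 * (u - v) ^ 2))⁻¹)
      = ∫ s in (0:ℝ)..L, IK33.Qd h ‖γ t - γ s‖ := rfl
  rw [hIdef]
  -- periodic shift and change of variables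
  have hperF : Function.Periodic (fun s => IK33.Qd h ‖γ t - γ s‖) L := by
    intro s; simp only [hper s]
  have hshift : (∫ s in (0:ℝ)..L, IK33.Qd h ‖γ t - γ s‖)
      = ∫ σ in (-(L/2))..(L/2), IK33.Qd h ‖γ t - γ (t + σ)‖ := by
    have h1 : (∫ s in (0:ℝ)..L, IK33.Qd h ‖γ t - γ s‖)
        = ∫ s in (t - L/2)..(t - L/2 + L), IK33.Qd h ‖γ t - γ s‖ := by
      have := hperF.intervalIntegral_add_eq 0 (t - L/2)
      simpa using this
    have h2 : (∫ σ in (-(L/2))..(L/2), IK33.Qd h ‖γ t - γ (t + σ)‖)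
        = ∫ s in (t + -(L/2))..(t + L/2), IK33.Qd h ‖γ t - γ s‖ :=
      intervalIntegral.integral_comp_add_left (fun s => IK33.Qd h ‖γ t - γ s‖) t
    rw [h1, h2]
    congr 1 <;> ring
  rw [hshift]
  -- pointwise bounds
  have hrr_le : ∀ σ : ℝ, ‖γ t - γ (t + σ)‖ ≤ |σ| := by
    intro σ
    have h1 := hlip1 t (t + σ)
    rwa [show t - (t + σ) = -σ by ring, abs_neg] at h1
  have hrr_pos : ∀ σ : ℝ, σ ≠ 0 → -(L/2) ≤ σ → σ ≤ L/2 → 0 < ‖γ t - γ (t + σ)‖ := by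
    intro σ hσ0 hσ1 hσ2
    rw [norm_pos_iff, sub_ne_zero]
    rcases lt_or_gt_of_ne hσ0 with hneg | hpos
    · have hne := IK33.gamma_ne hper hL hinj (t + σ) (-σ) (by linarith) (by linarith)
      rw [show t + σ + -σ = t by ring] at hne
      exact hne
    · have hne := IK33.gamma_ne hper hL hinj t σ hpos (by linarith)
      exact hne.symm
  have hlow : ∀ σ : ℝ, σ ≠ 0 → -(L/2) ≤ σ → σ ≤ L/2 →
      IK33.qK h |σ| ≤ IK33.Qd h ‖γ t - γ (t + σ)‖ := by
    intro σ hσ0 hσ1 hσ2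
    have habs : 0 < |σ| := abs_pos.2 hσ0
    have h1 := IK33.Qd_scale hh habs (hrr_pos σ hσ0 hσ1 hσ2) le_rfl
      (by rw [one_mul]; exact hrr_le σ)
    rw [← IK33.Qd_eq hh habs]
    linarith
  have hup : ∀ σ : ℝ, σ ≠ 0 → -(L/2) ≤ σ → σ ≤ L/2 →
      IK33.Qd h ‖γ t - γ (t + σ)‖ ≤ IK33.qK h |σ| + c₂ := by
    intro σ hσ0 hσ1 hσ2
    have habs : 0 < |σ| := abs_pos.2 hσ0
    have hrpos := hrr_pos σ hσ0 hσ1 hσ2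
    have hQd_abs : IK33.Qd h |σ| = IK33.qK h |σ| := IK33.Qd_eq hh habs
    rcases le_or_gt |σ| δ with hcase | hcase
    · -- Taylor regime
      have htay : |σ| - Λ * |σ| ^ 2 / 2 ≤ ‖γ t - γ (t + σ)‖ := by
        rcases lt_or_gt_of_ne hσ0 with hneg | hpos
        · have h1 := IK33.gamma_taylor hderiv hunit hΛ (t + σ) (-σ) (by linarith)
          rw [show t + σ + -σ = t by ring] at h1
          rw [abs_of_neg hneg]
          have e : -σ - Λ * (-σ) ^ 2 / 2 = -σ - Λ * σ ^ 2 / 2 := by ring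
          rw [e] at h1
          calc -σ - Λ * (-σ) ^ 2 / 2 = -σ - Λ * σ ^ 2 / 2 := by ring
            _ ≤ ‖γ t - γ (t + σ)‖ := h1
        · have h1 := IK33.gamma_taylor hderiv hunit hΛ t σ hpos.le
          rw [abs_of_pos hpos, norm_sub_rev]
          exact h1
      have hΛσ : Λ * |σ| ≤ 1 := by
        calc Λ * |σ| ≤ Λ * δ := mul_le_mul_of_nonneg_left hcase hΛpos.le
          _ ≤ 1 := hδΛ
      have hcd : |σ| ≤ (1 + Λ * |σ|) * ‖γ t - γ (t + σ)‖ := by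
        have e1 : (0:ℝ) ≤ Λ * |σ| := mul_nonneg hΛpos.le (abs_nonneg σ)
        have key := mul_le_mul_of_nonneg_left htay (by linarith : (0:ℝ) ≤ 1 + Λ * |σ|)
        have e2 : |σ| ≤ (1 + Λ * |σ|) * (|σ| - Λ * |σ| ^ 2 / 2) := by
          nlinarith [mul_nonneg (mul_nonneg hΛpos.le
            (mul_nonneg (abs_nonneg σ) (abs_nonneg σ))) (sub_nonneg.2 hΛσ)]
        linarith
      have h1 := IK33.Qd_scale hh hrpos habs
        (by linarith [mul_nonneg hΛpos.le (abs_nonneg σ)] : (1:ℝ) ≤ 1 + Λ * |σ|) hcd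
      have hQσ := IK33.Qd_le_inv hh habs
      have hQnn := IK33.Qd_nonneg h |σ|
      have hmulbd : |σ| * IK33.Qd h |σ| ≤ 1 := by
        calc |σ| * IK33.Qd h |σ| ≤ |σ| * (1 / |σ|) :=
              mul_le_mul_of_nonneg_left hQσ (abs_nonneg σ)
          _ = 1 := by field_simp
      have hinvc : (0:ℝ) < 1 / c₀ := by positivity
      calc IK33.Qd h ‖γ t - γ (t + σ)‖ ≤ (1 + Λ * |σ|) * IK33.Qd h |σ| := h1
        _ = IK33.Qd h |σ| + Λ * (|σ| * IK33.Qd h |σ|) := by ring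
        _ ≤ IK33.Qd h |σ| + Λ * 1 := by
            have := mul_le_mul_of_nonneg_left hmulbd hΛpos.le
            linarith
        _ ≤ IK33.qK h |σ| + c₂ := by rw [hQd_abs, hc₂def]; linarith
    · -- far regime
      have hrc : c₀ ≤ ‖γ t - γ (t + σ)‖ := by
        rcases lt_or_gt_of_ne hσ0 with hneg | hpos
        · rw [abs_of_neg hneg] at hcase
          have h1 := hmin (t + σ) (-σ) hcase.le (by linarith)
          rwa [show t + σ + -σ = t by ring] at h1
        · rw [abs_of_pos hpos] at hcase
          have h1 := hmin t σ hcase.le (by linarith)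
          rwa [norm_sub_rev]
      calc IK33.Qd h ‖γ t - γ (t + σ)‖ ≤ 1 / ‖γ t - γ (t + σ)‖ := IK33.Qd_le_inv hh hrpos
        _ ≤ 1 / c₀ := one_div_le_one_div_of_le hc₀ hrc
        _ ≤ IK33.qK h |σ| + c₂ := by
            rw [← hQd_abs, hc₂def]
            have := IK33.Qd_nonneg h |σ|
            linarith
  -- integrability of the comparison function
  have hqint : IntervalIntegrable (IK33.qK h) volume 0 (L/2) := IK33.qK_integrable hh hL2
  have hG1 : IntervalIntegrable (fun σ : ℝ => IK33.qK h |σ|) volume 0 (L/2) := by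
    rw [intervalIntegrable_iff, Set.uIoc_of_le hL2.le]
    rw [intervalIntegrable_iff, Set.uIoc_of_le hL2.le] at hqint
    apply hqint.congr_fun _ measurableSet_Ioc
    intro x hx
    simp [abs_of_pos hx.1]
  have hG2 : IntervalIntegrable (fun σ : ℝ => IK33.qK h |σ|) volume (-(L/2)) 0 := by
    have h1 := (IntervalIntegrable.iff_comp_neg (by simp)).1 hG1
    simp only [abs_neg, neg_zero] at h1
    exact h1.symm
  have hGint : IntervalIntegrable (fun σ : ℝ => IK33.qK h |σ|) volume (-(L/2)) (L/2) :=
    hG2.trans hG1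
  have hne0_ae : ∀ᵐ σ : ℝ ∂volume, σ ≠ 0 := by
    rw [MeasureTheory.ae_iff]
    have e : {a : ℝ | ¬ a ≠ 0} = {0} := by ext x; simp
    rw [e]
    exact Real.volume_singleton
  -- measurability
  set S : Set ℝ := Set.Ioc (-(L/2)) (L/2) \ {0} with hSdef
  have hSmeas : MeasurableSet S := measurableSet_Ioc.diff (measurableSet_singleton 0)
  have hrrcont : Continuous (fun σ : ℝ => ‖γ t - γ (t + σ)‖) :=
    (continuous_const.sub (hcont.comp (continuous_const.add continuous_id))).norm
  have hWcont : ContinuousOn (fun σ : ℝ => IK33.qK h ‖γ t - γ (t + σ)‖) S := by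
    apply ContinuousOn.comp (g := IK33.qK h) (t := {x : ℝ | 0 < x}) IK33.qK_contOn
      hrrcont.continuousOn
    intro σ hσ
    have hσ0 : σ ≠ 0 := by
      intro hc; exact hσ.2 (by simp [hc])
    exact hrr_pos σ hσ0 hσ.1.1.le hσ.1.2
  have hrestr_eq : volume.restrict (Set.Ioc (-(L/2)) (L/2)) = volume.restrict S := by
    symm
    apply Measure.restrict_congr_set
    apply MeasureTheory.diff_ae_eq_self.2
    apply measure_mono_null (Set.inter_subset_right)
    exact Real.volume_singleton
  have hae_S_ne : ∀ᵐ σ ∂(volume.restrict S), σ ≠ 0 := ae_restrict_of_ae hne0_ae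
  have hWaesm : AEStronglyMeasurable (fun σ : ℝ => IK33.Qd h ‖γ t - γ (t + σ)‖)
      (volume.restrict (Set.Ioc (-(L/2)) (L/2))) := by
    rw [hrestr_eq]
    apply (hWcont.aestronglyMeasurable hSmeas).congr
    filter_upwards [MeasureTheory.ae_restrict_mem hSmeas] with σ hσ
    have hσ0 : σ ≠ 0 := by intro hc; exact hσ.2 (by simp [hc])
    exact (IK33.Qd_eq hh (hrr_pos σ hσ0 hσ.1.1.le hσ.1.2)).symm
  have hWint : IntervalIntegrable (fun σ : ℝ => IK33.Qd h ‖γ t - γ (t + σ)‖)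
      volume (-(L/2)) (L/2) := by
    rw [intervalIntegrable_iff, Set.uIoc_of_le (by linarith : -(L/2) ≤ L/2)]
    have hgint : Integrable (fun σ : ℝ => IK33.qK h |σ| + c₂)
        (volume.restrict (Set.Ioc (-(L/2)) (L/2))) := by
      have h1 := hGint.add (intervalIntegrable_const (c := c₂))
      rw [intervalIntegrable_iff, Set.uIoc_of_le (by linarith : -(L/2) ≤ L/2)] at h1
      exact h1
    apply MeasureTheory.Integrable.mono' hgint hWaesm
    filter_upwards [MeasureTheory.ae_restrict_mem measurableSet_Ioc,
      ae_restrict_of_ae hne0_ae] with σ hσ hσ0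
    rw [Real.norm_eq_abs, abs_of_nonneg (IK33.Qd_nonneg h _)]
    exact hup σ hσ0 hσ.1.le hσ.2
  -- the sandwich for the integral
  have hJlow : (∫ σ in (-(L/2))..(L/2), IK33.qK h |σ|)
      ≤ ∫ σ in (-(L/2))..(L/2), IK33.Qd h ‖γ t - γ (t + σ)‖ := by
    apply intervalIntegral.integral_mono_ae_restrict (by linarith : -(L/2) ≤ L/2) hGint hWint
    filter_upwards [MeasureTheory.ae_restrict_mem measurableSet_Icc,
      ae_restrict_of_ae hne0_ae] with σ hσ hσ0
    exact hlow σ hσ0 hσ.1 hσ.2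
  have hJup : (∫ σ in (-(L/2))..(L/2), IK33.Qd h ‖γ t - γ (t + σ)‖)
      ≤ ∫ σ in (-(L/2))..(L/2), (IK33.qK h |σ| + c₂) := by
    apply intervalIntegral.integral_mono_ae_restrict (by linarith : -(L/2) ≤ L/2) hWint
      (hGint.add (intervalIntegrable_const (c := c₂)))
    filter_upwards [MeasureTheory.ae_restrict_mem measurableSet_Icc,
      ae_restrict_of_ae hne0_ae] with σ hσ hσ0
    exact hup σ hσ0 hσ.1 hσ.2
  have hsplitc : (∫ σ in (-(L/2))..(L/2), (IK33.qK h |σ| + c₂))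
      = (∫ σ in (-(L/2))..(L/2), IK33.qK h |σ|) + c₂ * L := by
    rw [intervalIntegral.integral_add hGint (intervalIntegrable_const (c := c₂)),
      intervalIntegral.integral_const]
    have : (L/2 - -(L/2)) • c₂ = c₂ * L := by
      rw [smul_eq_mul]; ring
    rw [this]
  have heven : (∫ σ in (-(L/2))..(L/2), IK33.qK h |σ|)
      = 2 * ∫ σ in (0:ℝ)..(L/2), IK33.qK h σ := by
    rw [← intervalIntegral.integral_add_adjacent_intervals hG2 hG1]
    have e1 : (∫ σ in (-(L/2))..(0:ℝ), IK33.qK h |σ|)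
        = ∫ σ in (0:ℝ)..(L/2), IK33.qK h |σ| := by
      have h1 := intervalIntegral.integral_comp_neg (a := (0:ℝ)) (b := L/2)
        (fun σ => IK33.qK h |σ|)
      simp only [abs_neg, neg_zero] at h1
      exact h1.symm
    have e2 : (∫ σ in (0:ℝ)..(L/2), IK33.qK h |σ|)
        = ∫ σ in (0:ℝ)..(L/2), IK33.qK h σ := by
      apply intervalIntegral.integral_congr
      intro x hx
      rw [Set.uIcc_of_le hL2.le] at hx
      simp [abs_of_nonneg hx.1]
    rw [e1, e2]
    ring
  have hmain := IK33.main_est hL2 hh hh2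
  rw [← hC₁def] at hmain
  rw [abs_le] at hmain
  rw [abs_le]
  constructor
  · linarith [hJlow, heven, hmain.1]
  · linarith [hJup, hsplitc, heven, hmain.2]
end

section
/- Define f : (0,∞) → ℝ by f(t) = arsinh(1/t) − 1/(t + √(1 + t²)), where arsinh(x) = log(x + √(x² + 1)). Then for every h > 0 and every z ∈ ℝ² with z ≠ 0, one has ∫₀¹∫₀¹ (‖z‖² + h²(s − t)²)^{−1/2} ds dt = (2/h)·f(‖z‖/h). -/
private lemma inner_int (a h s : ℝ) (ha : 0 < a) (hh : 0 < h) :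
    ∫ t in (0:ℝ)..1, (Real.sqrt (a ^ 2 + h ^ 2 * (s - t) ^ 2))⁻¹
      = (1 / h) * (Real.arsinh (h * s / a) + Real.arsinh (h * (1 - s) / a)) := by
  have key : ∀ t : ℝ, HasDerivAt (fun t => -(1 / h) * Real.arsinh (h * (s - t) / a))
      ((Real.sqrt (a ^ 2 + h ^ 2 * (s - t) ^ 2))⁻¹) t := by
    intro t
    have hu : HasDerivAt (fun t : ℝ => h * (s - t) / a) (h * (0 - 1) / a) t :=
      (((hasDerivAt_const t s).sub (hasDerivAt_id t)).const_mul h).div_const a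
    have := ((Real.hasDerivAt_arsinh (h * (s - t) / a)).comp t hu).const_mul (-(1 / h))
    convert this using 1
    · rfl
    · rfl
    · rfl
    have hpos : (0:ℝ) < 1 + (h * (s - t) / a) ^ 2 := by positivity
    have hs1 : Real.sqrt (a ^ 2 + h ^ 2 * (s - t) ^ 2)
        = a * Real.sqrt (1 + (h * (s - t) / a) ^ 2) := by
      rw [show a ^ 2 + h ^ 2 * (s - t) ^ 2 = a ^ 2 * (1 + (h * (s - t) / a) ^ 2) by
        field_simp]
      rw [Real.sqrt_mul (sq_nonneg a), Real.sqrt_sq ha.le]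
    rw [hs1]
    have hsne : Real.sqrt (1 + (h * (s - t) / a) ^ 2) ≠ 0 := by positivity
    field_simp
    ring
  rw [intervalIntegral.integral_eq_sub_of_hasDerivAt (fun t _ => key t) ?_]
  · rw [show h * (s - 1) / a = -(h * (1 - s) / a) by ring, Real.arsinh_neg]
    ring
  · apply Continuous.intervalIntegrable
    apply Continuous.inv₀ (by continuity)
    intro t
    have : (0:ℝ) < a ^ 2 + h ^ 2 * (s - t) ^ 2 := by positivity
    positivity

private lemma outer_int (c : ℝ) (hc : 0 < c) :
    ∫ s in (0:ℝ)..1, Real.arsinh (c * s)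
      = Real.arsinh c - (Real.sqrt (1 + c ^ 2) - 1) / c := by
  have key : ∀ s : ℝ, HasDerivAt
      (fun s => s * Real.arsinh (c * s) - Real.sqrt (1 + c ^ 2 * s ^ 2) / c)
      (Real.arsinh (c * s)) s := by
    intro s
    have hu : HasDerivAt (fun s : ℝ => c * s) c s := by
      simpa using (hasDerivAt_id s).const_mul c
    have p1 : HasDerivAt (fun s => s * Real.arsinh (c * s))
        (1 * Real.arsinh (c * s) + s * ((Real.sqrt (1 + (c * s) ^ 2))⁻¹ * c)) s :=
      (hasDerivAt_id s).mul ((Real.hasDerivAt_arsinh (c * s)).comp s hu)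
    have hv : HasDerivAt (fun s : ℝ => 1 + c ^ 2 * s ^ 2) (c ^ 2 * (2 * s ^ 1)) s :=
      ((hasDerivAt_pow 2 s).const_mul (c ^ 2)).const_add 1
    have hvpos : (0:ℝ) < 1 + c ^ 2 * s ^ 2 := by positivity
    have p2 : HasDerivAt (fun s => Real.sqrt (1 + c ^ 2 * s ^ 2) / c)
        ((1 / (2 * Real.sqrt (1 + c ^ 2 * s ^ 2)) * (c ^ 2 * (2 * s ^ 1))) / c) s :=
      (((Real.hasDerivAt_sqrt hvpos.ne').comp s hv)).div_const c
    have := p1.sub p2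
    convert this using 1
    · rfl
    · rfl
    · rfl
    have hsne : Real.sqrt (1 + c ^ 2 * s ^ 2) ≠ 0 := by positivity
    rw [show (c * s) ^ 2 = c ^ 2 * s ^ 2 by ring]
    field_simp
    ring
  rw [intervalIntegral.integral_eq_sub_of_hasDerivAt (fun s _ => key s)
    (Continuous.intervalIntegrable (by continuity) _ _)]
  simp [Real.sqrt_one]
  ring

/-- Explicit evaluation of the thin-film kernel: for `h > 0` and `z ≠ 0` in ℝ²,
`∫₀¹∫₀¹ (‖z‖² + h²(s - t)²)^{-1/2} ds dt = (2/h) f(‖z‖/h)` with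
`f(t) = arsinh(1/t) - 1/(t + √(1 + t²))`. -/
theorem stmt_7 (h : ℝ) (hh : 0 < h) (z : EuclideanSpace ℝ (Fin 2)) (hz : z ≠ 0)
    (f : ℝ → ℝ)
    (hf : ∀ t : ℝ, 0 < t → f t = Real.arsinh (1 / t) - 1 / (t + Real.sqrt (1 + t ^ 2))) :
    ∫ s in (0:ℝ)..1, ∫ t in (0:ℝ)..1,
        (Real.sqrt (‖z‖ ^ 2 + h ^ 2 * (s - t) ^ 2))⁻¹
      = (2 / h) * f (‖z‖ / h) := by
  set a := ‖z‖ with ha_def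
  have ha : 0 < a := norm_pos_iff.mpr hz
  set c := h / a with hc_def
  have hc : 0 < c := div_pos hh ha
  -- rewrite inner integral
  have step1 : (∫ s in (0:ℝ)..1, ∫ t in (0:ℝ)..1,
        (Real.sqrt (a ^ 2 + h ^ 2 * (s - t) ^ 2))⁻¹)
      = ∫ s in (0:ℝ)..1,
        (1 / h) * (Real.arsinh (c * s) + Real.arsinh (c * (1 - s))) := by
    apply intervalIntegral.integral_congr
    intro s _
    simp only []
    rw [inner_int a h s ha hh]
    rw [show h * s / a = c * s by rw [hc_def]; ring,
        show h * (1 - s) / a = c * (1 - s) by rw [hc_def]; ring]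
  rw [step1]
  have cont1 : Continuous fun s : ℝ => Real.arsinh (c * s) :=
    Real.continuous_arsinh.comp (by continuity)
  have cont2 : Continuous fun s : ℝ => Real.arsinh (c * (1 - s)) :=
    Real.continuous_arsinh.comp (by continuity)
  rw [intervalIntegral.integral_const_mul,
      intervalIntegral.integral_add (cont1.intervalIntegrable _ _)
        (cont2.intervalIntegrable _ _)]
  have e2 : (∫ s in (0:ℝ)..1, Real.arsinh (c * (1 - s)))
      = ∫ s in (0:ℝ)..1, Real.arsinh (c * s) := by
    have := intervalIntegral.integral_comp_sub_left (a := (0:ℝ)) (b := 1)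
      (fun x => Real.arsinh (c * x)) 1
    simpa using this
  rw [e2, outer_int c hc, hf (a / h) (div_pos ha hh)]
  -- algebra
  have ht : (0:ℝ) < a / h := div_pos ha hh
  have hsq : (0:ℝ) < 1 + (a / h) ^ 2 := by positivity
  have hsum : 0 < a / h + Real.sqrt (1 + (a / h) ^ 2) := by positivity
  have hrec : 1 / (a / h + Real.sqrt (1 + (a / h) ^ 2))
      = Real.sqrt (1 + (a / h) ^ 2) - a / h := by
    rw [div_eq_iff hsum.ne']
    have := Real.sq_sqrt hsq.le
    nlinarith [this]
  have hinv : (1:ℝ) / (a / h) = c := by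
    rw [hc_def, one_div_div]
  have hsqrt_rel : Real.sqrt (1 + (a / h) ^ 2) = Real.sqrt (1 + c ^ 2) / c := by
    rw [eq_div_iff hc.ne']
    rw [show Real.sqrt (1 + c ^ 2) = Real.sqrt ((1 + (a/h) ^ 2) * c ^ 2) by
      congr 1; rw [hc_def]; field_simp; ring]
    rw [Real.sqrt_mul hsq.le, Real.sqrt_sq hc.le]
  rw [hrec, hinv, hsqrt_rel]
  have hah : a / h = 1 / c := by rw [hc_def, one_div_div]
  rw [hah]
  field_simp
  ring
end

section
/- Define f : (0,∞) → ℝ by f(t) = arsinh(1/t) − 1/(t + √(1 + t²)), where arsinh(x) = log(x + √(x² + 1)). Then: (i) f(t) > 0 for all t > 0; (ii) f is strictly decreasing on (0,∞); (iii) f(t)/log(1/t) → 1 as t → 0⁺; (iv) there exists a constant C > 0 such that |t·f(t) − 1/2| ≤ C/t² for all t ≥ 1. -/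
open Real Filter Set

private lemma s_pos (t : ℝ) : 0 < Real.sqrt (1 + t ^ 2) :=
  Real.sqrt_pos.2 (by positivity)

private lemma s_sq (t : ℝ) : Real.sqrt (1 + t ^ 2) ^ 2 = 1 + t ^ 2 :=
  Real.sq_sqrt (by positivity)

private lemma lt_s {t : ℝ} (ht : 0 ≤ t) : t < Real.sqrt (1 + t ^ 2) := by
  nlinarith [s_sq t, s_pos t]

private lemma sqrt_inv_eq {t : ℝ} (ht : 0 < t) :
    Real.sqrt (1 + (1 / t) ^ 2) = Real.sqrt (1 + t ^ 2) / t := by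
  rw [show 1 + (1 / t) ^ 2 = (1 + t ^ 2) / t ^ 2 by field_simp; ring,
    Real.sqrt_div (by positivity) _, Real.sqrt_sq ht.le]

private lemma arsinh_lower {x : ℝ} (hx : 0 ≤ x) :
    x / Real.sqrt (1 + x ^ 2) ≤ Real.arsinh x := by
  set g : ℝ → ℝ := fun y => Real.arsinh y - y / Real.sqrt (1 + y ^ 2) with hg
  have hd : ∀ y : ℝ, HasDerivAt g
      ((Real.sqrt (1 + y ^ 2))⁻¹ -
        (1 * Real.sqrt (1 + y ^ 2) - y * (1 / (2 * Real.sqrt (1 + y ^ 2)) * (2 * y))) /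
          (Real.sqrt (1 + y ^ 2)) ^ 2) y := by
    intro y
    have h1 : HasDerivAt (fun y : ℝ => 1 + y ^ 2) (2 * y) y := by
      simpa using ((hasDerivAt_pow 2 y).const_add 1)
    have h2 : HasDerivAt (fun y : ℝ => Real.sqrt (1 + y ^ 2))
        (1 / (2 * Real.sqrt (1 + y ^ 2)) * (2 * y)) y :=
      (Real.hasDerivAt_sqrt (by positivity)).comp y h1
    exact (Real.hasDerivAt_arsinh y).sub ((hasDerivAt_id y).div h2 (s_pos y).ne')
  have hmono : MonotoneOn g (Set.Ici (0:ℝ)) := by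
    apply monotoneOn_of_deriv_nonneg (convex_Ici 0)
      (fun y _ => ((hd y).continuousAt).continuousWithinAt)
      (fun y _ => ((hd y).differentiableAt).differentiableWithinAt)
    intro y _
    rw [(hd y).deriv]
    set s := Real.sqrt (1 + y ^ 2) with hs
    have hsp : 0 < s := s_pos y
    have hs2 : s ^ 2 = 1 + y ^ 2 := s_sq y
    rw [sub_nonneg, div_le_iff₀ (by positivity)]
    have hkey : s⁻¹ * s ^ 2 = s := by rw [pow_two]; field_simp
    have hys : y * (1 / (2 * s) * (2 * y)) = y ^ 2 / s := by field_simp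
    rw [hys, hkey, one_mul]
    linarith [div_nonneg (sq_nonneg y) hsp.le]
  have := hmono (Set.self_mem_Ici) (hx) hx
  simpa [hg] using this

private lemma arsinh_upper {x : ℝ} (hx : 0 < x) : Real.arsinh x < x := by
  have h1 : Real.sinh (Real.arsinh x) < Real.sinh x := by
    rw [Real.sinh_arsinh]
    exact Real.self_lt_sinh_iff.2 hx
  exact Real.sinh_lt_sinh.1 h1

private lemma inv_add_eq {t : ℝ} (ht : 0 ≤ t) :
    1 / (t + Real.sqrt (1 + t ^ 2)) = Real.sqrt (1 + t ^ 2) - t := by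
  have hsp := s_pos t
  have hs2 := s_sq t
  rw [eq_comm, eq_div_iff (by positivity)]
  nlinarith

/-- Properties of the profile function `f(t) = arsinh(1/t) - 1/(t + √(1 + t²))`
of the thin-film kernel: (i) positivity on `(0,∞)`; (ii) strict monotone decrease
on `(0,∞)`; (iii) `f(t)/log(1/t) → 1` as `t → 0⁺`; (iv) `|t f(t) - 1/2| ≤ C/t²`
for `t ≥ 1`. -/
theorem stmt_8 (f : ℝ → ℝ)
    (hf : ∀ t : ℝ, 0 < t → f t = Real.arsinh (1 / t) - 1 / (t + Real.sqrt (1 + t ^ 2))) :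
    (∀ t : ℝ, 0 < t → 0 < f t) ∧
    StrictAntiOn f (Set.Ioi 0) ∧
    Filter.Tendsto (fun t => f t / Real.log (1 / t)) (nhdsWithin 0 (Set.Ioi 0)) (nhds 1) ∧
    ∃ C : ℝ, 0 < C ∧ ∀ t : ℝ, 1 ≤ t → |t * f t - 1 / 2| ≤ C / t ^ 2 := by
  have hlo' : ∀ t : ℝ, 0 < t → 1 / Real.sqrt (1 + t ^ 2) ≤ Real.arsinh (1 / t) := by
    intro t ht
    have hlo := arsinh_lower (x := 1 / t) (by positivity)
    rw [sqrt_inv_eq ht] at hlo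
    have hsp := s_pos t
    have h1 : (1 / t) / (Real.sqrt (1 + t ^ 2) / t) = 1 / Real.sqrt (1 + t ^ 2) := by
      field_simp
    rwa [h1] at hlo
  refine ⟨?_, ?_, ?_, ?_⟩
  · -- (i)
    intro t ht
    rw [hf t ht, inv_add_eq ht.le]
    have hsp := s_pos t
    have hs2 := s_sq t
    have hlo := hlo' t ht
    have hst : Real.sqrt (1 + t ^ 2) - t < 1 / Real.sqrt (1 + t ^ 2) := by
      rw [← inv_add_eq ht.le]
      apply one_div_lt_one_div_of_lt hsp
      linarith
    linarith
  · -- (ii)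
    have key : StrictAntiOn (fun x : ℝ => Real.arsinh x⁻¹ + x - Real.sqrt (1 + x ^ 2))
        (Set.Ioi 0) := by
      have hder : ∀ t : ℝ, 0 < t → HasDerivAt
          (fun x : ℝ => Real.arsinh x⁻¹ + x - Real.sqrt (1 + x ^ 2))
          ((Real.sqrt (1 + (t⁻¹) ^ 2))⁻¹ * (-(t ^ 2)⁻¹) + 1 -
            1 / (2 * Real.sqrt (1 + t ^ 2)) * (2 * t)) t := by
        intro t ht
        have hA : HasDerivAt (fun x : ℝ => Real.arsinh x⁻¹)
            ((Real.sqrt (1 + (t⁻¹) ^ 2))⁻¹ * (-(t ^ 2)⁻¹)) t :=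
          (Real.hasDerivAt_arsinh t⁻¹).comp t (hasDerivAt_inv ht.ne')
        have h1 : HasDerivAt (fun y : ℝ => 1 + y ^ 2) (2 * t) t := by
          simpa using ((hasDerivAt_pow 2 t).const_add 1)
        have hC : HasDerivAt (fun x : ℝ => Real.sqrt (1 + x ^ 2))
            (1 / (2 * Real.sqrt (1 + t ^ 2)) * (2 * t)) t :=
          (Real.hasDerivAt_sqrt (by positivity)).comp t h1
        exact (hA.add (hasDerivAt_id t)).sub hC
      apply strictAntiOn_of_deriv_neg (convex_Ioi 0)
      · exact fun t ht => ((hder t ht).continuousAt).continuousWithinAt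
      · intro t ht
        rw [interior_Ioi] at ht
        have ht' : (0:ℝ) < t := ht
        rw [(hder t ht').deriv]
        have hsp := s_pos t
        have hs2 := s_sq t
        have hts := lt_s ht.le
        have h1 : (t : ℝ)⁻¹ = 1 / t := (one_div t).symm
        rw [h1, sqrt_inv_eq ht]
        set s := Real.sqrt (1 + t ^ 2) with hs
        set E := (s / t)⁻¹ * (-(t ^ 2)⁻¹) + 1 - 1 / (2 * s) * (2 * t) with hE
        have hprod : E * (s * t) = s * t - t ^ 2 - 1 := by
          rw [hE]; field_simp; ring
        nlinarith [mul_pos hsp ht', hprod]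
    have heq : Set.EqOn (fun x : ℝ => Real.arsinh x⁻¹ + x - Real.sqrt (1 + x ^ 2)) f
        (Set.Ioi 0) := by
      intro t ht
      rw [Set.mem_Ioi] at ht
      have hone : (t:ℝ)⁻¹ = 1 / t := (one_div t).symm
      simp only [hone]
      rw [hf t ht, inv_add_eq ht.le]
      ring
    exact key.congr heq
  · -- (iii)
    have hev : ∀ᶠ t in nhdsWithin (0:ℝ) (Set.Ioi 0), f t / Real.log (1 / t) =
        1 + (Real.log (1 + Real.sqrt (1 + t ^ 2)) - (Real.sqrt (1 + t ^ 2) - t)) *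
          (Real.log (1 / t))⁻¹ := by
      filter_upwards [Ioo_mem_nhdsGT (zero_lt_one)] with t ht
      obtain ⟨ht0, ht1⟩ := ht
      have hsp := s_pos t
      have hL : 0 < Real.log (1 / t) :=
        Real.log_pos (by rw [lt_div_iff₀ ht0]; linarith)
      have harsinh : Real.arsinh (1 / t) =
          Real.log (1 + Real.sqrt (1 + t ^ 2)) + Real.log (1 / t) := by
        have hdef : Real.arsinh (1 / t) = Real.log (1 / t + Real.sqrt (1 + (1 / t) ^ 2)) := rfl
        rw [hdef, sqrt_inv_eq ht0]
        have h2 : 1 / t + Real.sqrt (1 + t ^ 2) / t = (1 + Real.sqrt (1 + t ^ 2)) / t := by ring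
        rw [h2, Real.log_div (by positivity) ht0.ne', one_div, Real.log_inv]
        ring
      rw [hf t ht0, inv_add_eq ht0.le, harsinh]
      field_simp
      ring
    have h1 : Filter.Tendsto
        (fun t : ℝ => Real.log (1 + Real.sqrt (1 + t ^ 2)) - (Real.sqrt (1 + t ^ 2) - t))
        (nhdsWithin 0 (Set.Ioi 0)) (nhds (Real.log 2 - 1)) := by
      have hs : Continuous (fun t : ℝ => Real.sqrt (1 + t ^ 2)) := by continuity
      have hc : ContinuousAt
          (fun t : ℝ => Real.log (1 + Real.sqrt (1 + t ^ 2)) - (Real.sqrt (1 + t ^ 2) - t)) 0 := by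
        apply ContinuousAt.sub
        · apply ContinuousAt.log
          · exact (continuous_const.add hs).continuousAt
          · norm_num [Real.sqrt_one]
        · exact ((hs.sub continuous_id).continuousAt)
      have := hc.tendsto.mono_left (nhdsWithin_le_nhds (s := Set.Ioi (0:ℝ)))
      simpa [Real.sqrt_one, show (1:ℝ)+1 = 2 by norm_num] using this
    have h2 : Filter.Tendsto (fun t : ℝ => (Real.log (1 / t))⁻¹)
        (nhdsWithin 0 (Set.Ioi 0)) (nhds 0) := by
      have : Filter.Tendsto (fun t : ℝ => Real.log (1 / t))
          (nhdsWithin 0 (Set.Ioi 0)) Filter.atTop := by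
        exact Filter.Tendsto.congr (fun x => by simp [Function.comp, one_div])
          (Real.tendsto_log_atTop.comp tendsto_inv_nhdsGT_zero)
      exact this.inv_tendsto_atTop
    have hmain := Filter.Tendsto.const_add (1:ℝ) (h1.mul h2)
    rw [mul_zero, add_zero] at hmain
    exact Filter.Tendsto.congr' (by filter_upwards [hev] with t h; exact h.symm) hmain
  · -- (iv)
    refine ⟨1, one_pos, fun t ht => ?_⟩
    have ht0 : 0 < t := lt_of_lt_of_le one_pos ht
    have hsp := s_pos t
    have hs2 := s_sq t
    have hts := lt_s ht0.le
    set s := Real.sqrt (1 + t ^ 2) with hs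
    set u := s - t with hu
    have hu0 : 0 < u := by simp only [hu]; linarith
    have huu : u ^ 2 + 2 * t * u = 1 := by nlinarith
    have htu : t * u ≤ 1 / 2 := by nlinarith [sq_nonneg u]
    have hu' : u ≤ 1 / (2 * t) := by
      rw [le_div_iff₀ (by positivity)]
      nlinarith [sq_nonneg u]
    rw [hf t ht0, inv_add_eq ht0.le, ← hu]
    set A := Real.arsinh (1 / t) with hA
    have hup : A ≤ 1 / t := (arsinh_upper (by positivity)).le
    have hlo : 1 / s ≤ A := hlo' t ht0
    have hAup : t * A ≤ 1 := by
      calc t * A ≤ t * (1 / t) := by gcongr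
        _ = 1 := by field_simp
    have hAlo : t / s ≤ t * A := by
      calc t / s = t * (1 / s) := by ring
        _ ≤ t * A := by gcongr
    have hb : 1 - t / s ≤ 1 / t ^ 2 := by
      have e1 : 1 - t / s = u / s := by field_simp [hu]; exact hu.symm
      rw [e1]
      calc u / s ≤ (1 / (2 * t)) / t := by gcongr
        _ = 1 / (2 * t ^ 2) := by ring
        _ ≤ 1 / t ^ 2 := by gcongr; nlinarith
    have hc : 1 / 2 - t * u ≤ 1 / t ^ 2 := by
      have e1 : t * u = (1 - u ^ 2) / 2 := by linarith
      have e2 : u ^ 2 ≤ 1 / (4 * t ^ 2) := by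
        calc u ^ 2 ≤ (1 / (2 * t)) ^ 2 := by gcongr
          _ = 1 / (4 * t ^ 2) := by ring
      have e3 : 1 / (4 * t ^ 2) ≤ 1 / t ^ 2 := by gcongr; nlinarith
      linarith
    rw [abs_le, show t * (A - u) = t * A - t * u from by ring]
    constructor
    · linarith [hAlo, hb, htu]
    · linarith [hAup, hc]
end

section
/- For h > 0, define Γ_h : ℝ² ∖ {0} → ℝ by Γ_h(x) = (1/(2πh))·(1/‖x‖ − 1/√(‖x‖² + h²)). Then for every R > 0: ∫_{B_R(0)} Γ_h(x) dx = 1 − ( R/h + √(1 + (R/h)²) )^{−1}; consequently 0 ≤ 1 − ∫_{B_R(0)} Γ_h(x) dx ≤ h/R. -/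
open MeasureTheory

/-- Exact integral of the kernel `Γ_h(x) = (1/(2πh))(1/‖x‖ - 1/√(‖x‖² + h²))`
over the disk `B_R(0)` in ℝ², and the resulting two-sided bound
`0 ≤ 1 - ∫_{B_R} Γ_h ≤ h/R` (proof of Lemma 3.2 of Ignat–Kurzke). -/
theorem stmt_10 (h R : ℝ) (hh : 0 < h) (hR : 0 < R) :
    (∫ x in Metric.ball (0 : EuclideanSpace ℝ (Fin 2)) R,
        (1 / (2 * Real.pi * h)) * (‖x‖⁻¹ - (Real.sqrt (‖x‖ ^ 2 + h ^ 2))⁻¹))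
      = 1 - (R / h + Real.sqrt (1 + (R / h) ^ 2))⁻¹ ∧
    0 ≤ 1 - ∫ x in Metric.ball (0 : EuclideanSpace ℝ (Fin 2)) R,
        (1 / (2 * Real.pi * h)) * (‖x‖⁻¹ - (Real.sqrt (‖x‖ ^ 2 + h ^ 2))⁻¹) ∧
    1 - (∫ x in Metric.ball (0 : EuclideanSpace ℝ (Fin 2)) R,
        (1 / (2 * Real.pi * h)) * (‖x‖⁻¹ - (Real.sqrt (‖x‖ ^ 2 + h ^ 2))⁻¹))
      ≤ h / R := by
  have hπ := Real.pi_pos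
  set s := Real.sqrt (R ^ 2 + h ^ 2) with hs
  have hs2 : s ^ 2 = R ^ 2 + h ^ 2 := Real.sq_sqrt (by positivity)
  have hspos : 0 < s := Real.sqrt_pos.mpr (by positivity)
  clear_value s
  set c := 1 / (2 * Real.pi * h) with hc
  set g : ℝ → ℝ := fun y => c * (y⁻¹ - (Real.sqrt (y ^ 2 + h ^ 2))⁻¹) with hg
  -- Step 1: reduce to an indicator over ℝ²
  have h1 : (∫ x in Metric.ball (0 : EuclideanSpace ℝ (Fin 2)) R, g ‖x‖)
      = ∫ x : EuclideanSpace ℝ (Fin 2), (Set.indicator (Set.Iio R) g) ‖x‖ := by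
    rw [← integral_indicator measurableSet_ball]
    congr 1
    ext x
    by_cases hx : ‖x‖ < R
    · rw [Set.indicator_of_mem (by simpa [mem_ball_zero_iff] using hx),
        Set.indicator_of_mem (by simpa using hx)]
    · rw [Set.indicator_of_notMem (by simpa [mem_ball_zero_iff] using hx),
        Set.indicator_of_notMem (by simpa using hx)]
  -- Step 2: polar-type formula
  have h2 := MeasureTheory.integral_fun_norm_addHaar
    (volume : Measure (EuclideanSpace ℝ (Fin 2))) (Set.indicator (Set.Iio R) g)
  have hdim : Module.finrank ℝ (EuclideanSpace ℝ (Fin 2)) = 2 := finrank_euclideanSpace_fin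
  have hvol : ((volume : Measure (EuclideanSpace ℝ (Fin 2)))
      (Metric.ball 0 1)).toReal = Real.pi := by
    rw [EuclideanSpace.volume_ball]
    simp [Fintype.card_fin, one_add_one_eq_two, Real.Gamma_two, Real.sq_sqrt hπ.le,
      ENNReal.toReal_ofReal hπ.le]
  -- Step 3: compute the 1D integral
  have h3 : (∫ y in Set.Ioi (0 : ℝ), y ^ 1 • (Set.indicator (Set.Iio R) g) y)
      = ∫ y in Set.Ioo (0 : ℝ) R, y * g y := by
    have e : ∀ y : ℝ, y ^ 1 • (Set.indicator (Set.Iio R) g) y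
        = Set.indicator (Set.Iio R) (fun y => y * g y) y := by
      intro y; by_cases hy : y ∈ Set.Iio R <;> simp [hy]
    simp_rw [e]
    rw [setIntegral_indicator measurableSet_Iio, Set.Ioi_inter_Iio]
  have h4 : (∫ y in Set.Ioo (0 : ℝ) R, y * g y)
      = ∫ y in Set.Ioo (0 : ℝ) R, c * (1 - y / Real.sqrt (y ^ 2 + h ^ 2)) := by
    apply setIntegral_congr_fun measurableSet_Ioo
    intro y hy
    have hy0 : y ≠ 0 := ne_of_gt hy.1
    have hsy : Real.sqrt (y ^ 2 + h ^ 2) ≠ 0 :=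
      Real.sqrt_ne_zero'.mpr (by positivity)
    simp only [hg]
    field_simp
  have hcont : Continuous (fun y : ℝ => c * (1 - y / Real.sqrt (y ^ 2 + h ^ 2))) := by
    apply continuous_const.mul
    apply continuous_const.sub
    apply Continuous.div continuous_id (Real.continuous_sqrt.comp (by continuity))
    intro y
    exact Real.sqrt_ne_zero'.mpr (by positivity)
  have h5 : (∫ y in Set.Ioo (0 : ℝ) R, c * (1 - y / Real.sqrt (y ^ 2 + h ^ 2)))
      = c * (R + h - s) := by
    rw [← MeasureTheory.integral_Ioc_eq_integral_Ioo,
      ← intervalIntegral.integral_of_le hR.le]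
    have hderiv : ∀ y ∈ Set.uIcc (0 : ℝ) R,
        HasDerivAt (fun y => c * (y - Real.sqrt (y ^ 2 + h ^ 2)))
          (c * (1 - y / Real.sqrt (y ^ 2 + h ^ 2))) y := by
      intro y _
      have h0 : y ^ 2 + h ^ 2 ≠ 0 := by positivity
      have hsy : Real.sqrt (y ^ 2 + h ^ 2) ≠ 0 :=
        Real.sqrt_ne_zero'.mpr (by positivity)
      have d1 : HasDerivAt (fun y : ℝ => y ^ 2 + h ^ 2) (2 * y) y := by
        simpa using (hasDerivAt_pow 2 y).add_const (h ^ 2)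
      have d2 : HasDerivAt (fun y : ℝ => Real.sqrt (y ^ 2 + h ^ 2))
          (1 / (2 * Real.sqrt (y ^ 2 + h ^ 2)) * (2 * y)) y :=
        (Real.hasDerivAt_sqrt h0).comp y d1
      have d3 := ((hasDerivAt_id y).sub d2).const_mul c
      refine d3.congr_deriv (Eq.symm ?_)
      field_simp
    rw [intervalIntegral.integral_eq_sub_of_hasDerivAt hderiv
      (hcont.intervalIntegrable 0 R)]
    have : Real.sqrt (0 ^ 2 + h ^ 2) = h := by
      rw [show (0:ℝ) ^ 2 + h ^ 2 = h ^ 2 by ring, Real.sqrt_sq hh.le]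
    rw [this, hs]
    ring
  -- assemble the value of the integral
  have hval : (∫ x in Metric.ball (0 : EuclideanSpace ℝ (Fin 2)) R,
        (1 / (2 * Real.pi * h)) * (‖x‖⁻¹ - (Real.sqrt (‖x‖ ^ 2 + h ^ 2))⁻¹))
      = 1 - h / (R + s) := by
    have : (∫ x in Metric.ball (0 : EuclideanSpace ℝ (Fin 2)) R,
        (1 / (2 * Real.pi * h)) * (‖x‖⁻¹ - (Real.sqrt (‖x‖ ^ 2 + h ^ 2))⁻¹))
        = ∫ x in Metric.ball (0 : EuclideanSpace ℝ (Fin 2)) R, g ‖x‖ := rfl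
    rw [this, h1, h2, hdim, measureReal_def, hvol, h3, h4, h5, nsmul_eq_mul, smul_eq_mul]
    have hRs : R + s ≠ 0 := by positivity
    have key2 : (R + h - s) / h = 1 - h / (R + s) := by
      field_simp
      linear_combination -hs2
    rw [← key2, hc]
    field_simp
    ring
  have hrhs : (R / h + Real.sqrt (1 + (R / h) ^ 2))⁻¹ = h / (R + s) := by
    have e1 : Real.sqrt (1 + (R / h) ^ 2) = s / h := by
      rw [show (1 : ℝ) + (R / h) ^ 2 = (R ^ 2 + h ^ 2) / h ^ 2 by field_simp; ring,
        Real.sqrt_div (by positivity), Real.sqrt_sq hh.le, ← hs]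
    rw [e1, ← add_div, inv_div]
  have hRs : (0:ℝ) < R + s := by positivity
  refine ⟨by rw [hval, hrhs], ?_, ?_⟩
  · rw [hval]
    have : 0 ≤ h / (R + s) := by positivity
    linarith
  · rw [hval]
    have : h / (R + s) ≤ h / R := by gcongr; linarith
    linarith
end

section
/- For h > 0, define ρ_h : [0,∞) → ℝ by ρ_h(r) = r/((r + √(r² + h²))·√(r² + h²)) for 0 ≤ r ≤ 1 and ρ_h(r) = 0 for r > 1. Then ∫_{ℝ²} ρ_h(‖x‖) dx ≤ π. -/
open MeasureTheory

/-- Uniform `L¹(ℝ²)` bound for the family `ρ_h`: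
for `ρ_h(r) = r/((r + √(r² + h²))√(r² + h²))` on `[0,1]` and `0` for `r > 1`,
one has `∫_{ℝ²} ρ_h(‖x‖) dx ≤ π` (proof of Lemma 3.2 of Ignat–Kurzke). -/
theorem stmt_11 (h : ℝ) (hh : 0 < h) (ρh : ℝ → ℝ)
    (hρ₁ : ∀ r : ℝ, 0 ≤ r → r ≤ 1 →
      ρh r = r / ((r + Real.sqrt (r ^ 2 + h ^ 2)) * Real.sqrt (r ^ 2 + h ^ 2)))
    (hρ₂ : ∀ r : ℝ, 1 < r → ρh r = 0) :
    ∫⁻ x : EuclideanSpace ℝ (Fin 2), ENNReal.ofReal (ρh ‖x‖)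
      ≤ ENNReal.ofReal Real.pi := by
  set E := EuclideanSpace ℝ (Fin 2)
  set F : ℝ → ℝ := fun r =>
    if r ≤ 1 then r / ((r + Real.sqrt (r ^ 2 + h ^ 2)) * Real.sqrt (r ^ 2 + h ^ 2)) else 0
    with hF
  -- basic facts about sqrt
  have hs_pos : ∀ r : ℝ, 0 < Real.sqrt (r ^ 2 + h ^ 2) := fun r =>
    Real.sqrt_pos.mpr (by positivity)
  have hr_le_s : ∀ r : ℝ, r ≤ Real.sqrt (r ^ 2 + h ^ 2) := by
    intro r
    calc r ≤ |r| := le_abs_self r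
    _ = Real.sqrt (r ^ 2) := (Real.sqrt_sq_eq_abs r).symm
    _ ≤ _ := Real.sqrt_le_sqrt (by nlinarith)
  have hs_sq : ∀ r : ℝ, Real.sqrt (r ^ 2 + h ^ 2) ^ 2 = r ^ 2 + h ^ 2 := fun r =>
    Real.sq_sqrt (by positivity)
  -- nonnegativity of F
  have hF_nonneg : ∀ r : ℝ, 0 ≤ r → 0 ≤ F r := by
    intro r hr
    rw [hF]
    dsimp only
    split_ifs with h1
    · have := hs_pos r
      have : 0 < r + Real.sqrt (r ^ 2 + h ^ 2) := by linarith [hr_le_s r, hs_pos r, hr]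
      positivity
    · exact le_rfl
  -- F bounded by 1/(2h)
  have hF_bdd : ∀ r : ℝ, 0 ≤ r → F r ≤ 1 / (2 * h) := by
    intro r hr
    rw [hF]
    dsimp only
    split_ifs with h1
    · set s := Real.sqrt (r ^ 2 + h ^ 2) with hs
      have hsp := hs_pos r
      have hrs := hr_le_s r
      have hsq := hs_sq r
      rw [div_le_div_iff₀ (by nlinarith) (by positivity)]
      nlinarith [sq_nonneg (r - h), mul_nonneg hr hsp.le]
    · positivity
  -- r * F r ≤ 1/2 on (0,1]
  have hF_half : ∀ r : ℝ, 0 < r → r * F r ≤ 1 / 2 := by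
    intro r hr
    rw [hF]
    dsimp only
    split_ifs with h1
    · set s := Real.sqrt (r ^ 2 + h ^ 2) with hs
      have hsp := hs_pos r
      have hrs := hr_le_s r
      have hsq := hs_sq r
      rw [mul_div_assoc']
      rw [div_le_iff₀ (by nlinarith)]
      nlinarith
    · simp
  -- measurability
  have hF_meas : Measurable F := by
    apply Measurable.ite measurableSet_Iic
    · fun_prop
    · exact measurable_const
  -- ρh ‖x‖ = F ‖x‖
  have hFx : ∀ x : E, ρh ‖x‖ = F ‖x‖ := by
    intro x
    rw [hF]
    dsimp only
    split_ifs with h1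
    · exact hρ₁ _ (norm_nonneg x) h1
    · exact hρ₂ _ (not_le.mp h1)
  -- integrability of x ↦ F ‖x‖
  have hg_int : Integrable ((Metric.closedBall (0 : E) 1).indicator
      (fun _ => 1 / (2 * h))) := by
    refine IntegrableOn.integrable_indicator ?_ measurableSet_closedBall
    exact (integrableOn_const_iff).mpr (Or.inr measure_closedBall_lt_top)
  have h_int : Integrable (fun x : E => F ‖x‖) := by
    refine hg_int.mono' ((hF_meas.comp measurable_norm).aestronglyMeasurable) ?_
    refine Filter.Eventually.of_forall fun x => ?_
    rw [Real.norm_eq_abs, abs_of_nonneg (hF_nonneg _ (norm_nonneg x))]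
    by_cases hx : ‖x‖ ≤ 1
    · rw [Set.indicator_of_mem (by simpa [Metric.mem_closedBall] using hx)]
      exact hF_bdd _ (norm_nonneg x)
    · rw [Set.indicator_of_notMem (by simpa [Metric.mem_closedBall] using hx)]
      rw [hF]; dsimp only; rw [if_neg hx]
  -- convert lintegral to Bochner integral
  have h_nonneg : 0 ≤ᵐ[volume] fun x : E => F ‖x‖ :=
    Filter.Eventually.of_forall fun x => hF_nonneg _ (norm_nonneg x)
  have key : (∫⁻ x : E, ENNReal.ofReal (ρh ‖x‖))
      = ENNReal.ofReal (∫ x : E, F ‖x‖) := by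
    rw [ofReal_integral_eq_lintegral_ofReal h_int h_nonneg]
    exact lintegral_congr fun x => by rw [hFx x]
  rw [key]
  apply ENNReal.ofReal_le_ofReal
  -- polar computation
  have hdim : Module.finrank ℝ E = 2 := by
    simp [E, finrank_euclideanSpace]
  have hball : (volume (Metric.ball (0 : E) 1)).toReal = Real.pi := by
    rw [EuclideanSpace.volume_ball]
    simp only [Fintype.card_fin]
    norm_num
    exact Real.sq_sqrt Real.pi_nonneg
  rw [integral_fun_norm_addHaar volume (fun y => F y), hdim]
  -- now: 2 • π • ∫ y in Ioi 0, y ^ 1 • F y ≤ π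
  have hI_le : (∫ y in Set.Ioi (0:ℝ), y ^ (2 - 1) • F y) ≤ 1 / 2 := by
    set G : ℝ → ℝ := (Set.Ioc (0:ℝ) 1).indicator (fun _ => (1:ℝ)/2) with hG
    have hG_int : Integrable G (volume.restrict (Set.Ioi 0)) := by
      refine IntegrableOn.integrable_indicator ?_ measurableSet_Ioc
      refine (integrableOn_const_iff).mpr (Or.inr ?_)
      exact lt_of_le_of_lt (Measure.restrict_apply_le _ _) measure_Ioc_lt_top
    have hle : (fun y : ℝ => y ^ (2 - 1) • F y) ≤ᵐ[volume.restrict (Set.Ioi 0)] G := by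
      filter_upwards [ae_restrict_mem measurableSet_Ioi] with y hy
      simp only [show (2-1:ℕ) = 1 from rfl, pow_one, smul_eq_mul, hG]
      by_cases hy1 : y ≤ 1
      · rw [Set.indicator_of_mem (Set.mem_Ioc.mpr ⟨hy, hy1⟩)]
        exact hF_half y hy
      · rw [Set.indicator_of_notMem (fun hmem => hy1 hmem.2)]
        rw [hF]; dsimp only; rw [if_neg hy1, mul_zero]
    have hf_int : Integrable (fun y : ℝ => y ^ (2 - 1) • F y)
        (volume.restrict (Set.Ioi 0)) := by
      refine hG_int.mono' ?_ ?_
      · simp only [smul_eq_mul]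
        exact ((measurable_id.pow_const _).mul hF_meas).aestronglyMeasurable
      · filter_upwards [ae_restrict_mem measurableSet_Ioi] with y hy
        simp only [show (2-1:ℕ) = 1 from rfl, pow_one, smul_eq_mul, Real.norm_eq_abs, hG]
        rw [abs_of_nonneg (mul_nonneg (le_of_lt hy) (hF_nonneg y (le_of_lt hy)))]
        by_cases hy1 : y ≤ 1
        · rw [Set.indicator_of_mem (Set.mem_Ioc.mpr ⟨hy, hy1⟩)]
          exact hF_half y hy
        · rw [Set.indicator_of_notMem (fun hmem => hy1 hmem.2)]
          rw [hF]; dsimp only; rw [if_neg hy1, mul_zero]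
    calc (∫ y in Set.Ioi (0:ℝ), y ^ (2 - 1) • F y)
        ≤ ∫ y, G y ∂(volume.restrict (Set.Ioi 0)) := integral_mono_ae hf_int hG_int hle
      _ = 1 / 2 := by
          rw [hG, integral_indicator measurableSet_Ioc,
            Measure.restrict_restrict measurableSet_Ioc,
            Set.inter_eq_self_of_subset_left Set.Ioc_subset_Ioi_self]
          simp [Real.volume_Ioc]
  have hI_nn := hI_le
  rw [measureReal_def, hball, nsmul_eq_mul, smul_eq_mul]
  calc (2:ℕ) * (Real.pi * ∫ y in Set.Ioi (0:ℝ), y ^ (2-1) • F y)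
      ≤ (2:ℕ) * (Real.pi * (1/2)) := by
        gcongr
    _ = Real.pi := by push_cast; ring
end

section
/- Let Λ > 0 and let γ : ℝ → ℝ² be differentiable with ‖γ'(t)‖ = 1 for all t and with γ' Lipschitz with Lipschitz constant Λ. Then for every t ∈ ℝ and every unit vector ν ∈ ℝ² with ⟨ν, γ'(t)⟩ = 0: |⟨γ(t) − γ(0), ν⟩| ≤ Λ·t²/2. Moreover, for every t with 0 < |t| ≤ 1/Λ one has γ(t) ≠ γ(0) and |⟨γ(t) − γ(0), ν⟩| / ‖γ(t) − γ(0)‖² ≤ 2Λ. -/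
open scoped RealInnerProductSpace
open intervalIntegral

lemma abs_int_aux (Λ t : ℝ) (hΛ : 0 ≤ Λ) : abs (∫ s in (0:ℝ)..t, Λ * |s - t|) = Λ * t ^ 2 / 2 := by
  rcases le_or_gt 0 t with ht | ht
  · have h : Set.EqOn (fun s => Λ * |s - t|) (fun s => Λ * (t - s)) (Set.uIcc 0 t) := by
      intro s hs
      rw [Set.uIcc_of_le ht] at hs
      simp only
      rw [abs_sub_comm, abs_of_nonneg (by linarith [hs.2])]
    rw [intervalIntegral.integral_congr h]
    simp only [intervalIntegral.integral_const_mul]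
    rw [intervalIntegral.integral_sub intervalIntegrable_const intervalIntegral.intervalIntegrable_id,
      integral_id, intervalIntegral.integral_const, smul_eq_mul]
    rw [abs_of_nonneg]
    · ring
    · nlinarith
  · have h : Set.EqOn (fun s => Λ * |s - t|) (fun s => Λ * (s - t)) (Set.uIcc 0 t) := by
      intro s hs
      rw [Set.uIcc_of_ge ht.le] at hs
      simp only
      rw [abs_of_nonneg (by linarith [hs.1])]
    rw [intervalIntegral.integral_congr h]
    simp only [intervalIntegral.integral_const_mul]
    rw [intervalIntegral.integral_sub intervalIntegral.intervalIntegrable_id intervalIntegrable_const,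
      integral_id, intervalIntegral.integral_const, smul_eq_mul]
    rw [abs_of_nonpos]
    · ring
    · nlinarith

lemma key_taylor (Λ : NNReal) (γ γ' : ℝ → EuclideanSpace ℝ (Fin 2))
    (hderiv : ∀ t, HasDerivAt γ (γ' t) t) (hlip : LipschitzWith Λ γ')
    (t : ℝ) (w : EuclideanSpace ℝ (Fin 2)) (hw : ‖w‖ = 1) :
    |⟪γ t - γ 0, w⟫ - t * ⟪γ' t, w⟫| ≤ (Λ : ℝ) * t ^ 2 / 2 := by
  have hg : ∀ s, HasDerivAt (fun s => ⟪γ s, w⟫) ⟪γ' s, w⟫ s := fun s => by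
    simpa using (hderiv s).inner ℝ (hasDerivAt_const s w)
  have cont : Continuous fun s => ⟪γ' s, w⟫ := hlip.continuous.inner continuous_const
  have hint : ∫ s in (0:ℝ)..t, ⟪γ' s, w⟫ = ⟪γ t, w⟫ - ⟪γ 0, w⟫ :=
    intervalIntegral.integral_eq_sub_of_hasDerivAt (fun s _ => hg s)
      (cont.intervalIntegrable 0 t)
  have hconst : t * ⟪γ' t, w⟫ = ∫ s in (0:ℝ)..t, ⟪γ' t, w⟫ := by
    rw [intervalIntegral.integral_const, smul_eq_mul]; ring
  have heq : ⟪γ t - γ 0, w⟫ - t * ⟪γ' t, w⟫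
      = ∫ s in (0:ℝ)..t, (⟪γ' s, w⟫ - ⟪γ' t, w⟫) := by
    rw [intervalIntegral.integral_sub (cont.intervalIntegrable 0 t)
      (intervalIntegrable_const), hint, inner_sub_left, hconst]
  rw [heq]
  calc |∫ s in (0:ℝ)..t, (⟪γ' s, w⟫ - ⟪γ' t, w⟫)|
      ≤ abs (∫ s in (0:ℝ)..t, (Λ : ℝ) * |s - t|) := by
        rw [← Real.norm_eq_abs]
        apply intervalIntegral.norm_integral_le_abs_of_norm_le
        · filter_upwards with s
          have h1 : ⟪γ' s, w⟫ - ⟪γ' t, w⟫ = ⟪γ' s - γ' t, w⟫ := (inner_sub_left _ _ _).symm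
          rw [Real.norm_eq_abs, h1]
          calc |⟪γ' s - γ' t, w⟫| ≤ ‖γ' s - γ' t‖ * ‖w‖ := abs_real_inner_le_norm _ _
            _ ≤ (Λ : ℝ) * |s - t| := by
                rw [hw, mul_one]
                have := hlip.dist_le_mul s t
                rwa [dist_eq_norm, Real.dist_eq] at this
        · exact ((continuous_const.mul (continuous_id.sub continuous_const).abs)).intervalIntegrable 0 t
    _ = (Λ : ℝ) * t ^ 2 / 2 := abs_int_aux _ _ Λ.2

/-- Boundedness of the normal component of chords of a unit-speed `C^{1,1}`
curve (footnote in the proof of Proposition 5.1 of Ignat–Kurzke): if `γ'` is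
Lipschitz with constant `Λ > 0` and `ν` is a unit normal at parameter `t`, then
`|⟨γ(t) - γ(0), ν⟩| ≤ Λ t²/2`; moreover for `0 < |t| ≤ 1/Λ` one has
`γ(t) ≠ γ(0)` and `|⟨γ(t) - γ(0), ν⟩|/‖γ(t) - γ(0)‖² ≤ 2Λ`. -/
theorem stmt_16 (Λ : NNReal) (hΛ : 0 < Λ)
    (γ : ℝ → EuclideanSpace ℝ (Fin 2)) (γ' : ℝ → EuclideanSpace ℝ (Fin 2))
    (hderiv : ∀ t, HasDerivAt γ (γ' t) t)
    (hunit : ∀ t, ‖γ' t‖ = 1)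
    (hlip : LipschitzWith Λ γ') :
    ∀ t : ℝ, ∀ ν : EuclideanSpace ℝ (Fin 2), ‖ν‖ = 1 → ⟪ν, γ' t⟫ = 0 →
      |⟪γ t - γ 0, ν⟫| ≤ (Λ : ℝ) * t ^ 2 / 2 ∧
      (0 < |t| → |t| ≤ 1 / (Λ : ℝ) →
        γ t ≠ γ 0 ∧ |⟪γ t - γ 0, ν⟫| / ‖γ t - γ 0‖ ^ 2 ≤ 2 * (Λ : ℝ)) := by
  intro t ν hν hperp
  have hΛ' : (0:ℝ) < Λ := hΛ
  have h1 : |⟪γ t - γ 0, ν⟫| ≤ (Λ : ℝ) * t ^ 2 / 2 := by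
    have := key_taylor Λ γ γ' hderiv hlip t ν hν
    rwa [real_inner_comm ν (γ' t), hperp, mul_zero, sub_zero] at this
  refine ⟨h1, fun hpos hle => ?_⟩
  have h2 := key_taylor Λ γ γ' hderiv hlip t (γ' t) (hunit t)
  rw [real_inner_self_eq_norm_sq, hunit t] at h2
  have hΛt2 : (Λ : ℝ) * t ^ 2 / 2 ≤ |t| / 2 := by
    have h3 : (Λ : ℝ) * |t| ≤ 1 := by
      rw [← le_div_iff₀' hΛ'] ; exact hle
    nlinarith [sq_abs t, abs_nonneg t]
  have hlow : |t| / 2 ≤ |⟪γ t - γ 0, γ' t⟫| := by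
    set x := ⟪γ t - γ 0, γ' t⟫ with hx
    have h4 : |x - t| ≤ |t| / 2 := by
      simpa using le_trans h2 hΛt2
    have h6 : |t| ≤ |x| + |t - x| := by
      calc |t| = |x + (t - x)| := by ring_nf
        _ ≤ |x| + |t - x| := abs_add_le _ _
    rw [abs_sub_comm] at h4
    linarith
  have hnorm : |t| / 2 ≤ ‖γ t - γ 0‖ := by
    calc |t| / 2 ≤ |⟪γ t - γ 0, γ' t⟫| := hlow
      _ ≤ ‖γ t - γ 0‖ * ‖γ' t‖ := abs_real_inner_le_norm _ _
      _ = ‖γ t - γ 0‖ := by rw [hunit t, mul_one]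
  have hne : γ t ≠ γ 0 := by
    intro h
    rw [h] at hnorm
    simp at hnorm
    linarith
  refine ⟨hne, ?_⟩
  have hpos2 : (0:ℝ) < ‖γ t - γ 0‖ ^ 2 :=
    pow_pos (norm_pos_iff.2 (sub_ne_zero.2 hne)) 2
  rw [div_le_iff₀ hpos2]
  calc |⟪γ t - γ 0, ν⟫| ≤ (Λ : ℝ) * t ^ 2 / 2 := h1
    _ ≤ 2 * (Λ : ℝ) * ‖γ t - γ 0‖ ^ 2 := by
        have hsq := mul_self_le_mul_self (by positivity : (0:ℝ) ≤ |t| / 2) hnorm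
        nlinarith [sq_abs t, hΛ'.le, hsq, mul_nonneg hΛ'.le (sq_nonneg t)]
end

section
/- Let Ω ⊂ ℝ² be a measurable set of finite Lebesgue measure, let a₁,…,a_N ∈ ℝ², let ρ₀ ∈ (0, 1], K ≥ 0, and let f : Ω → [0, ∞] be measurable such that for every ρ ∈ (0, ρ₀]: ∫_{Ω ∖ ⋃_{j=1}^N B_ρ(a_j)} f(x)² dx ≤ K·(1 + log(1/ρ)). Then for every q ∈ [1, 2) there exists a constant C, depending only on q, N, K, ρ₀ and the Lebesgue measure of Ω, such that ∫_Ω f(x)^q dx ≤ C. -/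
open MeasureTheory
open scoped ENNReal

lemma holder_aux {α : Type*} [MeasurableSpace α] (μ : Measure α)
    (f : α → ℝ≥0∞) (hf : Measurable f) {q : ℝ} (hq1 : 1 ≤ q) (hq2 : q < 2) :
    ∫⁻ x, f x ^ q ∂μ ≤ (∫⁻ x, f x ^ 2 ∂μ) ^ (q / 2) * (μ Set.univ) ^ (1 - q / 2) := by
  have hq0 : 0 < q := lt_of_lt_of_le one_pos hq1
  have hpq : (2 / q).HolderConjugate (2 / (2 - q)) := by
    rw [Real.holderConjugate_iff]
    constructor
    · rw [lt_div_iff₀ hq0]; linarith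
    · have h1 : q ≠ 0 := ne_of_gt hq0
      have h2 : 2 - q ≠ 0 := by intro h; linarith [sub_eq_zero.mp h]
      field_simp
      ring
  have h := ENNReal.lintegral_mul_le_Lp_mul_Lq μ hpq
    (f := fun x => f x ^ q) (g := fun _ => 1)
    ((hf.pow_const q).aemeasurable) aemeasurable_const
  simp only [Pi.mul_apply, mul_one, ENNReal.one_rpow, lintegral_one] at h
  have e1 : ∀ x, (f x ^ q) ^ (2 / q) = f x ^ 2 := by
    intro x
    rw [← ENNReal.rpow_mul, show q * (2 / q) = ((2:ℕ):ℝ) by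
      push_cast; field_simp, ENNReal.rpow_natCast]
  simp only [e1] at h
  have e2 : 1 / (2 / q) = q / 2 := one_div_div _ _
  have e3 : 1 / (2 / (2 - q)) = 1 - q / 2 := by rw [one_div_div]; ring
  rwa [e2, e3] at h

set_option maxHeartbeats 1000000 in
/-- Struwe's dyadic decomposition argument (used in the proof of Theorem 1.12(iv)
of Ignat–Kurzke): if a nonnegative measurable function `f` on a planar set `Ω`
of finite Lebesgue measure satisfies
`∫_{Ω ∖ ⋃ B_ρ(a_j)} f² ≤ K (1 + log(1/ρ))` for all `ρ ∈ (0, ρ₀]`, then for every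
`q ∈ [1, 2)` the integral `∫_Ω f^q` is bounded by a constant depending only on
`q, N, K, ρ₀` and the measure of `Ω`. -/
theorem stmt_17 (N : ℕ) (K ρ₀ A : ℝ) (hK : 0 ≤ K) (hρ₀ : 0 < ρ₀) (hρ₀1 : ρ₀ ≤ 1)
    (q : ℝ) (hq1 : 1 ≤ q) (hq2 : q < 2) :
    ∃ C : ℝ, ∀ (Ω : Set (EuclideanSpace ℝ (Fin 2)))
      (a : Fin N → EuclideanSpace ℝ (Fin 2)) (f : EuclideanSpace ℝ (Fin 2) → ℝ≥0∞),
      MeasurableSet Ω → volume Ω ≤ ENNReal.ofReal A → Measurable f →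
      (∀ ρ : ℝ, 0 < ρ → ρ ≤ ρ₀ →
        ∫⁻ x in Ω \ ⋃ j, Metric.ball (a j) ρ, (f x) ^ 2
          ≤ ENNReal.ofReal (K * (1 + Real.log (1 / ρ)))) →
      ∫⁻ x in Ω, (f x) ^ q ≤ ENNReal.ofReal C := by
  classical
  have hq0 : 0 < q := lt_of_lt_of_le one_pos hq1
  have hq2' : 0 < 1 - q / 2 := by linarith
  have hqle : 0 ≤ q / 2 := by linarith
  have hlog : 0 ≤ Real.log (1 / ρ₀) :=
    Real.log_nonneg (by rw [le_div_iff₀ hρ₀]; linarith)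
  have hl2 : 0 ≤ Real.log 2 := Real.log_nonneg one_le_two
  set M : ℝ := K * (1 + Real.log (1 / ρ₀) + Real.log 2) with hM_def
  have hM : 0 ≤ M := mul_nonneg hK (by linarith)
  set r : ℝ := (1 / 4 : ℝ) ^ (1 - q / 2) with hr_def
  have hr0 : 0 < r := Real.rpow_pos_of_pos (by norm_num) _
  have hr1 : r < 1 := Real.rpow_lt_one (by norm_num) (by norm_num) hq2'
  set c : ℝ := M ^ (q / 2) * (((N : ℝ) * Real.pi) ^ (1 - q / 2)) with hc_def
  have hc : 0 ≤ c :=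
    mul_nonneg (Real.rpow_nonneg hM _) (Real.rpow_nonneg (by positivity) _)
  have hb_nonneg : ∀ k : ℕ, 0 ≤ c * ((k + 1 : ℝ) * r ^ k) := by
    intro k; positivity
  have hsum : Summable (fun k : ℕ => c * ((k + 1 : ℝ) * r ^ k)) := by
    apply Summable.mul_left
    have h1 : Summable (fun k : ℕ => (k : ℝ) * r ^ k) := by
      simpa using summable_pow_mul_geometric_of_norm_lt_one 1
        (r := r) (by rw [Real.norm_eq_abs, abs_of_pos hr0]; exact hr1)
    have h2 : Summable (fun k : ℕ => r ^ k) :=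
      summable_geometric_of_lt_one hr0.le hr1
    have := h1.add h2
    refine this.congr (fun k => ?_)
    ring
  set D : ℝ := (K * (1 + Real.log (1 / ρ₀))) ^ (q / 2) * (max A 0) ^ (1 - q / 2)
    with hD_def
  have hKl : 0 ≤ K * (1 + Real.log (1 / ρ₀)) := mul_nonneg hK (by linarith)
  have hD0 : 0 ≤ D :=
    mul_nonneg (Real.rpow_nonneg hKl _) (Real.rpow_nonneg (le_max_right _ _) _)
  refine ⟨D + ∑' k : ℕ, c * ((k + 1 : ℝ) * r ^ k), ?_⟩
  intro Ω a f hΩ hvol hf hint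
  set U : ℕ → Set (EuclideanSpace ℝ (Fin 2)) :=
    fun k => ⋃ j, Metric.ball (a j) (ρ₀ * (1 / 2) ^ k) with hU_def
  -- inclusion of Ω in the pieces
  have hsub : Ω ⊆ (Ω \ U 0) ∪ ((⋃ k, Ω ∩ (U k \ U (k + 1))) ∪ Set.range a) := by
    intro x hx
    by_cases h0 : x ∈ U 0
    · by_cases ha : x ∈ Set.range a
      · exact Or.inr (Or.inr ha)
      · have hex : ∃ k, x ∉ U k := by
          obtain ⟨j, _⟩ := Set.mem_iUnion.mp h0
          have hne : (Finset.univ : Finset (Fin N)).Nonempty := ⟨j, Finset.mem_univ j⟩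
          set δ := Finset.univ.inf' hne (fun i => dist x (a i)) with hδ
          have hδpos : 0 < δ := by
            rw [hδ, Finset.lt_inf'_iff]
            intro i _
            rw [dist_pos]
            intro h
            exact ha ⟨i, h.symm⟩
          obtain ⟨n, hn⟩ := exists_pow_lt_of_lt_one hδpos
            (by norm_num : (1 / 2 : ℝ) < 1)
          refine ⟨n, ?_⟩
          rw [hU_def]
          simp only [Set.mem_iUnion, Metric.mem_ball, not_exists, not_lt]
          intro i
          have h1 : δ ≤ dist x (a i) := Finset.inf'_le _ (Finset.mem_univ i)
          have h2 : ρ₀ * (1 / 2 : ℝ) ^ n ≤ (1 / 2 : ℝ) ^ n := by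
            nlinarith [pow_nonneg (by norm_num : (0:ℝ) ≤ 1 / 2) n]
          linarith
        set m := Nat.find hex with hm_def
        have hmspec : x ∉ U m := Nat.find_spec hex
        have hm0 : m ≠ 0 := by
          intro h
          rw [h] at hmspec
          exact hmspec h0
        obtain ⟨l, hl⟩ := Nat.exists_eq_succ_of_ne_zero hm0
        refine Or.inr (Or.inl (Set.mem_iUnion.mpr ⟨l, hx, ?_, ?_⟩))
        · have := Nat.find_min hex (show l < m by omega)
          exact not_not.mp this
        · rw [show l + 1 = m by omega]
          exact hmspec
    · exact Or.inl ⟨hx, h0⟩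
  -- the range piece is null
  have hrange : ∫⁻ x in Set.range a, f x ^ q = 0 := by
    rw [Measure.restrict_eq_zero.mpr ((Set.finite_range a).countable.measure_zero _),
      lintegral_zero_measure]
  -- outside piece
  have hD : ∫⁻ x in Ω \ U 0, f x ^ q ≤ ENNReal.ofReal D := by
    have h1 := holder_aux (volume.restrict (Ω \ U 0)) f hf hq1 hq2
    rw [Measure.restrict_apply_univ] at h1
    refine h1.trans ?_
    have hf2 : ∫⁻ x in Ω \ U 0, f x ^ 2
        ≤ ENNReal.ofReal (K * (1 + Real.log (1 / ρ₀))) := by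
      have h := hint ρ₀ hρ₀ le_rfl
      simpa only [hU_def, pow_zero, mul_one] using h
    have hμ : volume (Ω \ U 0) ≤ ENNReal.ofReal (max A 0) :=
      (measure_mono Set.diff_subset).trans
        (hvol.trans (ENNReal.ofReal_le_ofReal (le_max_left _ _)))
    calc (∫⁻ x in Ω \ U 0, f x ^ 2) ^ (q / 2) * volume (Ω \ U 0) ^ (1 - q / 2)
        ≤ (ENNReal.ofReal (K * (1 + Real.log (1 / ρ₀)))) ^ (q / 2)
          * (ENNReal.ofReal (max A 0)) ^ (1 - q / 2) := by
          gcongr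
      _ = ENNReal.ofReal D := by
          rw [ENNReal.ofReal_rpow_of_nonneg hKl hqle,
            ENNReal.ofReal_rpow_of_nonneg (le_max_right _ _) hq2'.le,
            ← ENNReal.ofReal_mul (Real.rpow_nonneg hKl _), hD_def]
  -- dyadic pieces
  have hpiece : ∀ k : ℕ, ∫⁻ x in Ω ∩ (U k \ U (k + 1)), f x ^ q
      ≤ ENNReal.ofReal (c * ((k + 1 : ℝ) * r ^ k)) := by
    intro k
    have h1 := holder_aux (volume.restrict (Ω ∩ (U k \ U (k + 1)))) f hf hq1 hq2
    rw [Measure.restrict_apply_univ] at h1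
    refine h1.trans ?_
    have hk1 : (1 : ℝ) ≤ (k : ℝ) + 1 := le_add_of_nonneg_left (Nat.cast_nonneg k)
    -- energy bound on the piece
    have hf2 : ∫⁻ x in Ω ∩ (U k \ U (k + 1)), f x ^ 2
        ≤ ENNReal.ofReal (M * ((k : ℝ) + 1)) := by
      have hsub2 : Ω ∩ (U k \ U (k + 1)) ⊆ Ω \ U (k + 1) :=
        fun x hx => ⟨hx.1, hx.2.2⟩
      have hρpos : 0 < ρ₀ * (1 / 2 : ℝ) ^ (k + 1) := by positivity
      have hρle : ρ₀ * (1 / 2 : ℝ) ^ (k + 1) ≤ ρ₀ := by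
        nlinarith [pow_le_one₀ (by norm_num : (0:ℝ) ≤ 1 / 2)
          (by norm_num : (1 / 2 : ℝ) ≤ 1) (n := k + 1)]
      have h := hint _ hρpos hρle
      refine (lintegral_mono_set hsub2).trans (h.trans (ENNReal.ofReal_le_ofReal ?_))
      have hlogeq : Real.log (1 / (ρ₀ * (1 / 2 : ℝ) ^ (k + 1)))
          = Real.log (1 / ρ₀) + ((k : ℝ) + 1) * Real.log 2 := by
        rw [one_div, mul_inv, Real.log_mul (by positivity) (by positivity), ← one_div]
        congr 1
        rw [← inv_pow, Real.log_pow]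
        norm_num
      rw [hlogeq, hM_def]
      nlinarith [mul_nonneg hK (mul_nonneg (by linarith : (0:ℝ) ≤ 1 + Real.log (1 / ρ₀))
        (by linarith : (0:ℝ) ≤ (k : ℝ) + 1 - 1))]
    -- measure bound on the piece
    have hμ : volume (Ω ∩ (U k \ U (k + 1)))
        ≤ ENNReal.ofReal ((N : ℝ) * Real.pi * (1 / 4 : ℝ) ^ k) := by
      refine (measure_mono (fun x hx => hx.2.1)).trans ?_
      rw [hU_def]
      refine (measure_iUnion_le _).trans ?_
      have hball : ∀ j : Fin N, volume (Metric.ball (a j) (ρ₀ * (1 / 2 : ℝ) ^ k))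
          ≤ ENNReal.ofReal (Real.pi * (1 / 4 : ℝ) ^ k) := by
        intro j
        rw [EuclideanSpace.volume_ball]
        simp only [Fintype.card_fin]
        rw [← ENNReal.ofReal_pow (by positivity), ← ENNReal.ofReal_mul (by positivity)]
        apply ENNReal.ofReal_le_ofReal
        have hΓ : Real.sqrt Real.pi ^ 2 / Real.Gamma ((2 : ℕ) / 2 + 1) = Real.pi := by
          rw [Real.sq_sqrt Real.pi_nonneg,
            show ((2 : ℕ) : ℝ) / 2 + 1 = 2 by norm_num, Real.Gamma_two, div_one]
        rw [hΓ]
        have h4 : ((1 / 2 : ℝ) ^ k) ^ 2 = (1 / 4 : ℝ) ^ k := by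
          rw [← pow_mul, mul_comm, pow_mul]; norm_num
        have hpk : (0 : ℝ) ≤ (1 / 4 : ℝ) ^ k := by positivity
        calc (ρ₀ * (1 / 2 : ℝ) ^ k) ^ 2 * Real.pi
            = ρ₀ ^ 2 * ((1 / 4 : ℝ) ^ k * Real.pi) := by rw [mul_pow, h4]; ring
          _ ≤ 1 * ((1 / 4 : ℝ) ^ k * Real.pi) := by
              have : ρ₀ ^ 2 ≤ 1 := by nlinarith
              have h0 : (0:ℝ) ≤ (1 / 4 : ℝ) ^ k * Real.pi :=
                mul_nonneg hpk Real.pi_nonneg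
              nlinarith
          _ = Real.pi * (1 / 4 : ℝ) ^ k := by ring
      calc ∑' j : Fin N, volume (Metric.ball (a j) (ρ₀ * (1 / 2 : ℝ) ^ k))
          ≤ ∑' _ : Fin N, ENNReal.ofReal (Real.pi * (1 / 4 : ℝ) ^ k) :=
            ENNReal.tsum_le_tsum hball
        _ = (N : ℝ≥0∞) * ENNReal.ofReal (Real.pi * (1 / 4 : ℝ) ^ k) := by
            rw [tsum_fintype]
            simp [Finset.sum_const, nsmul_eq_mul]
        _ = ENNReal.ofReal ((N : ℝ) * Real.pi * (1 / 4 : ℝ) ^ k) := by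
            rw [mul_assoc, ENNReal.ofReal_mul (Nat.cast_nonneg N),
              ENNReal.ofReal_natCast]
    -- combine
    have h14 : ((1 / 4 : ℝ) ^ k) ^ (1 - q / 2) = r ^ k := by
      rw [← Real.rpow_natCast (1 / 4 : ℝ) k, ← Real.rpow_mul (by norm_num),
        mul_comm, Real.rpow_mul (by norm_num), Real.rpow_natCast, hr_def]
    calc (∫⁻ x in Ω ∩ (U k \ U (k + 1)), f x ^ 2) ^ (q / 2)
          * volume (Ω ∩ (U k \ U (k + 1))) ^ (1 - q / 2)
        ≤ (ENNReal.ofReal (M * ((k : ℝ) + 1))) ^ (q / 2)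
          * (ENNReal.ofReal ((N : ℝ) * Real.pi * (1 / 4 : ℝ) ^ k)) ^ (1 - q / 2) := by
          gcongr
      _ = ENNReal.ofReal ((M * ((k : ℝ) + 1)) ^ (q / 2)
          * (((N : ℝ) * Real.pi * (1 / 4 : ℝ) ^ k)) ^ (1 - q / 2)) := by
          rw [ENNReal.ofReal_rpow_of_nonneg (by positivity) hqle,
            ENNReal.ofReal_rpow_of_nonneg (by positivity) hq2'.le,
            ← ENNReal.ofReal_mul (Real.rpow_nonneg (by positivity) _)]
      _ ≤ ENNReal.ofReal (c * ((k + 1 : ℝ) * r ^ k)) := by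
          apply ENNReal.ofReal_le_ofReal
          have e2 : (M * ((k : ℝ) + 1)) ^ (q / 2)
              = M ^ (q / 2) * ((k : ℝ) + 1) ^ (q / 2) :=
            Real.mul_rpow hM (by positivity)
          have e : ((N : ℝ) * Real.pi * (1 / 4 : ℝ) ^ k) ^ (1 - q / 2)
              = ((N : ℝ) * Real.pi) ^ (1 - q / 2) * r ^ k := by
            rw [Real.mul_rpow (by positivity) (by positivity), h14]
          rw [e2, e]
          have hexp : ((k : ℝ) + 1) ^ (q / 2) ≤ (k : ℝ) + 1 := by
            calc ((k : ℝ) + 1) ^ (q / 2) ≤ ((k : ℝ) + 1) ^ (1 : ℝ) :=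
                Real.rpow_le_rpow_of_exponent_le hk1 (by linarith)
              _ = (k : ℝ) + 1 := Real.rpow_one _
          calc M ^ (q / 2) * ((k : ℝ) + 1) ^ (q / 2)
                * (((N : ℝ) * Real.pi) ^ (1 - q / 2) * r ^ k)
              ≤ M ^ (q / 2) * ((k : ℝ) + 1)
                * (((N : ℝ) * Real.pi) ^ (1 - q / 2) * r ^ k) := by
                have h0 : (0:ℝ) ≤ M ^ (q / 2) := Real.rpow_nonneg hM _
                have h1 : (0:ℝ) ≤ ((N : ℝ) * Real.pi) ^ (1 - q / 2) * r ^ k :=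
                  mul_nonneg (Real.rpow_nonneg (by positivity) _) (by positivity)
                gcongr
            _ = c * ((k + 1 : ℝ) * r ^ k) := by rw [hc_def]; ring
  -- sum the pieces
  have hsumle : ∫⁻ x in ⋃ k, Ω ∩ (U k \ U (k + 1)), f x ^ q
      ≤ ENNReal.ofReal (∑' k : ℕ, c * ((k + 1 : ℝ) * r ^ k)) := by
    refine (lintegral_iUnion_le _ _).trans ?_
    rw [ENNReal.ofReal_tsum_of_nonneg hb_nonneg hsum]
    exact ENNReal.tsum_le_tsum hpiece
  -- conclude
  calc ∫⁻ x in Ω, f x ^ q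
      ≤ ∫⁻ x in (Ω \ U 0) ∪ ((⋃ k, Ω ∩ (U k \ U (k + 1))) ∪ Set.range a), f x ^ q :=
        lintegral_mono_set hsub
    _ ≤ (∫⁻ x in Ω \ U 0, f x ^ q)
        + ((∫⁻ x in ⋃ k, Ω ∩ (U k \ U (k + 1)), f x ^ q)
          + ∫⁻ x in Set.range a, f x ^ q) :=
        (lintegral_union_le _ _ _).trans
          (add_le_add le_rfl (lintegral_union_le _ _ _))
    _ ≤ ENNReal.ofReal D + (ENNReal.ofReal (∑' k : ℕ, c * ((k + 1 : ℝ) * r ^ k)) + 0) :=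
        add_le_add hD (add_le_add hsumle (le_of_eq hrange))
    _ = ENNReal.ofReal (D + ∑' k : ℕ, c * ((k + 1 : ℝ) * r ^ k)) := by
        rw [add_zero, ← ENNReal.ofReal_add hD0 (tsum_nonneg hb_nonneg)]
end

section
/- Let L > 0, c > 0 and let γ : ℝ → ℝ² be continuous, L-periodic (γ(t + L) = γ(t) for all t), and chord–arc in the sense that ‖γ(s) − γ(t)‖ ≥ c·min_{k∈ℤ}|s − t − kL| for all s, t ∈ ℝ. Let R > 0 and let Ω ⊆ B_R(0) ⊂ ℝ² be measurable. Then there exists a constant C, depending only on L, c and R, such that for every f ∈ L²(Ω) and every g ∈ L²(0, L): ∫₀^L ∫_Ω ( |f(x)|·|g(s)| / ‖x − γ(s)‖ ) dx ds ≤ C·‖f‖_{L²(Ω)}·‖g‖_{L²(0,L)}. -/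
open MeasureTheory Set ENNReal

lemma layercake_bound {α : Type*} [MeasurableSpace α] (μ : Measure α) [SFinite μ]
    (h : α → ℝ) (h_nn : ∀ a, 0 ≤ h a) (h_mble : Measurable h)
    (κ : ℝ) (hκ : 1 < κ) (V M : ℝ≥0∞) (hM : M ≠ ⊤)
    (hV : ∀ t : ℝ, 0 < t → μ {a | t < h a} ≤ V)
    (hMb : ∀ t : ℝ, 0 < t → μ {a | t < h a} ≤ M * ENNReal.ofReal (t ^ (-κ))) :
    ∫⁻ a, ENNReal.ofReal (h a) ∂μ ≤ V + M * ENNReal.ofReal (1 / (κ - 1)) := by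
  rw [lintegral_eq_lintegral_meas_lt μ (ae_of_all _ h_nn) h_mble.aemeasurable]
  have hsplit : Set.Ioi (0:ℝ) = Set.Ioc 0 1 ∪ Set.Ioi 1 :=
    (Set.Ioc_union_Ioi_eq_Ioi zero_le_one).symm
  rw [hsplit, lintegral_union measurableSet_Ioi (Set.Ioc_disjoint_Ioi le_rfl)]
  have h1 : ∫⁻ t in Set.Ioc (0:ℝ) 1, μ {a | t < h a} ≤ V := by
    calc ∫⁻ t in Set.Ioc (0:ℝ) 1, μ {a | t < h a}
        ≤ ∫⁻ _ in Set.Ioc (0:ℝ) 1, V :=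
          setLIntegral_mono' measurableSet_Ioc (fun t ht => hV t ht.1)
      _ = V * volume (Set.Ioc (0:ℝ) 1) := setLIntegral_const _ _
      _ = V := by rw [Real.volume_Ioc]; norm_num
  have h2 : ∫⁻ t in Set.Ioi (1:ℝ), μ {a | t < h a} ≤ M * ENNReal.ofReal (1 / (κ - 1)) := by
    have hint : IntegrableOn (fun t : ℝ => t ^ (-κ)) (Set.Ioi 1) :=
      integrableOn_Ioi_rpow_of_lt (by linarith) zero_lt_one
    have hpos : 0 ≤ᵐ[volume.restrict (Set.Ioi (1:ℝ))] fun t : ℝ => t ^ (-κ) :=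
      (ae_restrict_iff' measurableSet_Ioi).2 (ae_of_all _ fun t ht =>
        Real.rpow_nonneg (le_of_lt (lt_trans zero_lt_one ht)) _)
    have hval : ∫ t in Set.Ioi (1:ℝ), t ^ (-κ) = 1 / (κ - 1) := by
      rw [integral_Ioi_rpow_of_lt (by linarith) zero_lt_one, Real.one_rpow]
      have h1 : κ - 1 ≠ 0 := by linarith
      have h2 : -κ + 1 ≠ 0 := by intro h'; apply h1; linarith
      field_simp
      ring
    calc ∫⁻ t in Set.Ioi (1:ℝ), μ {a | t < h a}
        ≤ ∫⁻ t in Set.Ioi (1:ℝ), M * ENNReal.ofReal (t ^ (-κ)) :=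
          setLIntegral_mono' measurableSet_Ioi (fun t ht => hMb t (lt_trans zero_lt_one ht))
      _ = M * ∫⁻ t in Set.Ioi (1:ℝ), ENNReal.ofReal (t ^ (-κ)) := lintegral_const_mul' _ _ hM
      _ = M * ENNReal.ofReal (∫ t in Set.Ioi (1:ℝ), t ^ (-κ)) := by
          rw [ofReal_integral_eq_lintegral_ofReal hint hpos]
      _ = M * ENNReal.ofReal (1 / (κ - 1)) := by rw [hval]
  exact add_le_add h1 h2

lemma inv_rpow_sublevel {r t p : ℝ} (hr : 0 ≤ r) (hp : 0 < p) (ht : 0 < t)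
    (h : t < r ^ (-p)) : r < t ^ (-p⁻¹) := by
  have htp : 0 < t ^ (-p⁻¹) := Real.rpow_pos_of_pos ht _
  rcases eq_or_lt_of_le hr with h0 | h0
  · rw [← h0]; exact htp
  · by_contra hcon
    push_neg at hcon
    have hle : r ^ (-p) ≤ (t ^ (-p⁻¹)) ^ (-p) :=
      Real.rpow_le_rpow_of_nonpos htp hcon (neg_nonpos.2 hp.le)
    have h2 : (t ^ (-p⁻¹)) ^ (-p) = t := by
      rw [← Real.rpow_mul ht.le]
      rw [show -p⁻¹ * -p = 1 by field_simp]
      exact Real.rpow_one t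
    rw [h2] at hle
    exact absurd h (not_lt.2 hle)

noncomputable abbrev E2 := EuclideanSpace ℝ (Fin 2)

lemma line_sublevel (L c : ℝ) (hL : 0 < L) (hc : 0 < c)
    (γ : ℝ → E2)
    (hchord : ∀ s t : ℝ, c * (⨅ k : ℤ, |s - t - (k : ℝ) * L|) ≤ ‖γ s - γ t‖)
    (x : E2) (ρ : ℝ) (hρ : 0 < ρ) :
    volume ({s : ℝ | ‖x - γ s‖ < ρ} ∩ Set.Ioc 0 L)
      ≤ min (ENNReal.ofReal L) (ENNReal.ofReal (12 / c * ρ)) := by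
  refine le_min ?_ ?_
  · refine le_trans (measure_mono inter_subset_right) ?_
    rw [Real.volume_Ioc]
    exact le_of_eq (by norm_num)
  · rcases ({s : ℝ | ‖x - γ s‖ < ρ} ∩ Set.Ioc 0 L).eq_empty_or_nonempty with he | ⟨s₁, hs₁⟩
    · rw [he]; simp
    · set r := 2 * ρ / c with hr
      have hrpos : 0 < r := by positivity
      have key : ({s : ℝ | ‖x - γ s‖ < ρ} ∩ Set.Ioc 0 L) ⊆
          Metric.ball s₁ r ∪ (Metric.ball (s₁ + L) r ∪ Metric.ball (s₁ - L) r) := by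
        intro s hs
        have hnorm : ‖γ s - γ s₁‖ < 2 * ρ := by
          calc ‖γ s - γ s₁‖ ≤ ‖γ s - x‖ + ‖x - γ s₁‖ := norm_sub_le_norm_sub_add_norm_sub _ _ _
            _ = ‖x - γ s‖ + ‖x - γ s₁‖ := by rw [norm_sub_rev]
            _ < ρ + ρ := add_lt_add hs.1 hs₁.1
            _ = 2 * ρ := by ring
        have habs : |s - s₁| ≤ L := by
          rw [abs_le]
          constructor <;> [linarith [hs.2.1, hs₁.2.2]; linarith [hs.2.2, hs₁.2.1]]
        have hmin : min |s - s₁| (min |s - s₁ - L| |s - s₁ + L|) ≤ ⨅ k : ℤ, |s - s₁ - (k : ℝ) * L| := by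
          apply le_ciInf
          intro k
          by_cases h0 : k = 0
          · subst h0; simpa using min_le_left _ _
          by_cases h1 : k = 1
          · subst h1
            refine le_trans (le_trans (min_le_right _ _) (min_le_left _ _)) (le_of_eq ?_)
            norm_num
          by_cases hm1 : k = -1
          · subst hm1
            refine le_trans (le_trans (min_le_right _ _) (min_le_right _ _)) (le_of_eq ?_)
            push_cast
            ring_nf
          · have hk2 : 2 ≤ |k| := by
              rcases lt_or_ge k 0 with hneg | hpos
              · rw [abs_of_neg hneg]; omega
              · rw [abs_of_nonneg hpos]; omega
            have hk2' : (2 : ℝ) ≤ |(k : ℝ)| := by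
              rw [← Int.cast_abs]
              exact_mod_cast hk2
            have hlow : |(k : ℝ) * L| - |s - s₁| ≤ |s - s₁ - (k : ℝ) * L| :=
              calc |(k : ℝ) * L| - |s - s₁| ≤ |(k : ℝ) * L - (s - s₁)| :=
                    abs_sub_abs_le_abs_sub _ _
                _ = |s - s₁ - (k : ℝ) * L| := abs_sub_comm _ _
            have : (2 : ℝ) * L ≤ |(k : ℝ) * L| := by
              rw [abs_mul, abs_of_pos hL]
              nlinarith
            calc min |s - s₁| (min |s - s₁ - L| |s - s₁ + L|) ≤ |s - s₁| := min_le_left _ _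
              _ ≤ |(k : ℝ) * L| - |s - s₁| := by linarith
              _ ≤ _ := hlow
        have hlt : min |s - s₁| (min |s - s₁ - L| |s - s₁ + L|) < r := by
          rw [hr, lt_div_iff₀ hc]
          calc min |s - s₁| (min |s - s₁ - L| |s - s₁ + L|) * c
              = c * min |s - s₁| (min |s - s₁ - L| |s - s₁ + L|) := by ring
            _ ≤ c * ⨅ k : ℤ, |s - s₁ - (k : ℝ) * L| :=
                mul_le_mul_of_nonneg_left hmin hc.le
            _ ≤ ‖γ s - γ s₁‖ := hchord s s₁
            _ < 2 * ρ := hnorm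
        rcases min_lt_iff.1 hlt with h | h
        · exact Or.inl (by rw [Metric.mem_ball, Real.dist_eq]; exact h)
        rcases min_lt_iff.1 h with h' | h'
        · refine Or.inr (Or.inl ?_)
          rw [Metric.mem_ball, Real.dist_eq]
          have : s - (s₁ + L) = s - s₁ - L := by ring
          rw [this]; exact h'
        · refine Or.inr (Or.inr ?_)
          rw [Metric.mem_ball, Real.dist_eq]
          have : s - (s₁ - L) = s - s₁ + L := by ring
          rw [this]; exact h'
      calc volume ({s : ℝ | ‖x - γ s‖ < ρ} ∩ Set.Ioc 0 L)
          ≤ volume (Metric.ball s₁ r ∪ (Metric.ball (s₁ + L) r ∪ Metric.ball (s₁ - L) r)) :=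
            measure_mono key
        _ ≤ volume (Metric.ball s₁ r) + (volume (Metric.ball (s₁ + L) r) + volume (Metric.ball (s₁ - L) r)) :=
            le_trans (measure_union_le _ _) (by gcongr; exact measure_union_le _ _)
        _ = ENNReal.ofReal (2 * r) + (ENNReal.ofReal (2 * r) + ENNReal.ofReal (2 * r)) := by
            rw [Real.volume_ball, Real.volume_ball, Real.volume_ball]
        _ ≤ ENNReal.ofReal (12 / c * ρ) := by
            rw [← ENNReal.ofReal_add (by positivity) (by positivity),
              ← ENNReal.ofReal_add (by positivity) (by positivity)]
            apply ENNReal.ofReal_le_ofReal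
            rw [hr]
            refine le_of_eq ?_
            field_simp
            ring


lemma line_bound (L c : ℝ) (hL : 0 < L) (hc : 0 < c)
    (γ : ℝ → E2) (hcont : Continuous γ)
    (hchord : ∀ s t : ℝ, c * (⨅ k : ℤ, |s - t - (k : ℝ) * L|) ≤ ‖γ s - γ t‖)
    (x : E2) :
    ∫⁻ s in Set.Ioc (0:ℝ) L, ENNReal.ofReal (‖x - γ s‖ ^ (-(2⁻¹ : ℝ)))
      ≤ ENNReal.ofReal (L + 12 / c) := by
  have hmeas : Measurable fun s : ℝ => ‖x - γ s‖ ^ (-(2⁻¹ : ℝ)) :=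
    ((continuous_const.sub hcont).norm.measurable).pow_const _
  have hsetm : ∀ t : ℝ, MeasurableSet {s : ℝ | t < ‖x - γ s‖ ^ (-(2⁻¹ : ℝ))} :=
    fun t => measurableSet_lt measurable_const hmeas
  have hsub : ∀ t : ℝ, 0 < t →
      (volume.restrict (Set.Ioc (0:ℝ) L)) {s : ℝ | t < ‖x - γ s‖ ^ (-(2⁻¹ : ℝ))}
        ≤ min (ENNReal.ofReal L) (ENNReal.ofReal (12 / c * t ^ (-(2:ℝ)))) := by
    intro t ht
    rw [Measure.restrict_apply (hsetm t)]
    have hincl : {s : ℝ | t < ‖x - γ s‖ ^ (-(2⁻¹ : ℝ))} ∩ Set.Ioc 0 L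
        ⊆ {s : ℝ | ‖x - γ s‖ < t ^ (-(2:ℝ))} ∩ Set.Ioc 0 L := by
      refine Set.inter_subset_inter_left _ ?_
      intro s hs
      have := inv_rpow_sublevel (norm_nonneg (x - γ s)) (by norm_num : (0:ℝ) < 2⁻¹) ht hs
      simpa using this
    refine le_trans (measure_mono hincl) ?_
    exact line_sublevel L c hL hc γ hchord x _ (Real.rpow_pos_of_pos ht _)
  have := layercake_bound (volume.restrict (Set.Ioc (0:ℝ) L))
    (fun s => ‖x - γ s‖ ^ (-(2⁻¹ : ℝ)))
    (fun s => Real.rpow_nonneg (norm_nonneg _) _) hmeas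
    2 one_lt_two (ENNReal.ofReal L) (ENNReal.ofReal (12 / c)) ENNReal.ofReal_ne_top
    (fun t ht => le_trans (hsub t ht) (min_le_left _ _))
    (fun t ht => le_trans (hsub t ht) (le_trans (min_le_right _ _)
      (le_of_eq (ENNReal.ofReal_mul (by positivity)))))
  refine le_trans this ?_
  rw [show (1:ℝ) / (2 - 1) = 1 by norm_num, ENNReal.ofReal_one, mul_one,
    ← ENNReal.ofReal_add hL.le (by positivity)]

lemma area_bound (R : ℝ) (hR : 0 < R) (Ω : Set E2) (hΩm : MeasurableSet Ω)
    (hΩ : Ω ⊆ Metric.ball (0 : E2) R) (y : E2) :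
    ∫⁻ x in Ω, ENNReal.ofReal (‖x - y‖ ^ (-(3/2 : ℝ)))
      ≤ ENNReal.ofReal ((R ^ 2 + 3) * (volume (Metric.ball (0 : E2) 1)).toReal) := by
  set vb := volume (Metric.ball (0 : E2) 1) with hvb
  have hvbne : vb ≠ ⊤ := measure_ball_lt_top.ne
  have hfr : Module.finrank ℝ E2 = 2 := finrank_euclideanSpace_fin
  have hballvol : ∀ (z : E2) (ρ : ℝ), 0 ≤ ρ →
      volume (Metric.ball z ρ) = ENNReal.ofReal (ρ ^ 2) * vb := by
    intro z ρ hρ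
    rw [Measure.addHaar_ball volume z hρ, hfr]
  have hmeas : Measurable fun x : E2 => ‖x - y‖ ^ (-(3/2 : ℝ)) :=
    ((continuous_id.sub continuous_const).norm.measurable).pow_const _
  have hsub : ∀ t : ℝ, 0 < t →
      (volume.restrict Ω) {x : E2 | t < ‖x - y‖ ^ (-(3/2 : ℝ))}
        ≤ min (ENNReal.ofReal (R ^ 2) * vb) (vb * ENNReal.ofReal (t ^ (-(4/3 : ℝ)))) := by
    intro t ht
    rw [Measure.restrict_apply (measurableSet_lt measurable_const hmeas)]
    have hincl : {x : E2 | t < ‖x - y‖ ^ (-(3/2 : ℝ))} ∩ Ω ⊆ Metric.ball y (t ^ (-(2/3 : ℝ))) ∩ Ω := by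
      refine Set.inter_subset_inter_left _ ?_
      intro x hx
      have h' := inv_rpow_sublevel (norm_nonneg (x - y)) (by norm_num : (0:ℝ) < 3/2) ht hx
      rw [Metric.mem_ball, dist_eq_norm]
      convert h' using 2
      norm_num
    refine le_trans (measure_mono hincl) (le_min ?_ ?_)
    · refine le_trans (measure_mono (le_trans Set.inter_subset_right hΩ)) ?_
      exact le_of_eq (hballvol 0 R hR.le)
    · refine le_trans (measure_mono Set.inter_subset_left) ?_
      rw [hballvol y _ (Real.rpow_nonneg ht.le _)]
      refine le_of_eq ?_
      rw [mul_comm]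
      congr 2
      rw [← Real.rpow_natCast (t ^ (-(2/3 : ℝ))) 2, ← Real.rpow_mul ht.le]
      norm_num
  have := layercake_bound (volume.restrict Ω) (fun x => ‖x - y‖ ^ (-(3/2 : ℝ)))
    (fun x => Real.rpow_nonneg (norm_nonneg _) _) hmeas
    (4/3) (by norm_num) (ENNReal.ofReal (R ^ 2) * vb) vb hvbne
    (fun t ht => le_trans (hsub t ht) (min_le_left _ _))
    (fun t ht => le_trans (hsub t ht) (min_le_right _ _))
  refine le_trans this (le_of_eq ?_)
  rw [show (1:ℝ) / (4/3 - 1) = 3 by norm_num]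
  conv_lhs => rw [← ENNReal.ofReal_toReal hvbne]
  rw [← ENNReal.ofReal_mul (by positivity), mul_comm (ENNReal.ofReal vb.toReal) _,
    ← ENNReal.ofReal_mul (by norm_num),
    ← ENNReal.ofReal_add (by positivity) (by positivity)]
  congr 1
  ring

/-- The generalized Young inequality of Ignat–Kurzke (footnote in the proof of
Lemma 3.2): for a closed chord–arc curve `γ` of period `L` in the plane and a
measurable set `Ω ⊆ B_R(0)`, there is `C = C(L, c, R)` such that for all
`f ∈ L²(Ω)` and `g ∈ L²(0, L)`,
`∫₀^L ∫_Ω |f(x)||g(s)|/‖x - γ(s)‖ dx ds ≤ C ‖f‖_{L²(Ω)} ‖g‖_{L²(0,L)}`. -/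
theorem stmt_19 (L c R : ℝ) (hL : 0 < L) (hc : 0 < c) (hR : 0 < R)
    (γ : ℝ → EuclideanSpace ℝ (Fin 2)) (hcont : Continuous γ)
    (hper : ∀ t, γ (t + L) = γ t)
    (hchord : ∀ s t : ℝ, c * (⨅ k : ℤ, |s - t - (k : ℝ) * L|) ≤ ‖γ s - γ t‖) :
    ∃ C : ℝ, 0 < C ∧
      ∀ (Ω : Set (EuclideanSpace ℝ (Fin 2))), MeasurableSet Ω →
        Ω ⊆ Metric.ball (0 : EuclideanSpace ℝ (Fin 2)) R →
      ∀ (f : EuclideanSpace ℝ (Fin 2) → ℝ) (g : ℝ → ℝ), Measurable f → Measurable g →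
      IntegrableOn (fun x => f x ^ 2) Ω volume →
      IntegrableOn (fun s => g s ^ 2) (Set.Ioc 0 L) volume →
      ∫⁻ s in Set.Ioc (0:ℝ) L, ∫⁻ x in Ω,
          ENNReal.ofReal (|f x| * |g s| / ‖x - γ s‖)
        ≤ ENNReal.ofReal (C * Real.sqrt (∫ x in Ω, f x ^ 2)
            * Real.sqrt (∫ s in Set.Ioc (0:ℝ) L, g s ^ 2)) := by
  classical
  set b : ℝ := (volume (Metric.ball (0 : E2) 1)).toReal with hbdef
  have hbpos : 0 < b :=
    ENNReal.toReal_pos (Metric.measure_ball_pos volume 0 one_pos).ne' measure_ball_lt_top.ne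
  set A : ℝ := L + 12 / c with hAdef
  set B : ℝ := (R ^ 2 + 3) * b with hBdef
  have hApos : 0 < A := by positivity
  have hBpos : 0 < B := by positivity
  refine ⟨Real.sqrt A * Real.sqrt B, by positivity, ?_⟩
  intro Ω hΩm hΩ f g hf hg hfi hgi
  set μpr := (volume.restrict (Set.Ioc (0:ℝ) L)).prod (volume.restrict Ω) with hμpr
  set r : ℝ × E2 → ℝ := fun z => ‖z.2 - γ z.1‖ with hrdef
  have hrc : Continuous r := (continuous_snd.sub (hcont.comp continuous_fst)).norm
  set u : ℝ × E2 → ℝ≥0∞ := fun z => ENNReal.ofReal (|f z.2| * r z ^ (-(4⁻¹ : ℝ))) with hudef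
  set v : ℝ × E2 → ℝ≥0∞ := fun z => ENNReal.ofReal (|g z.1| * r z ^ (-(3/4 : ℝ))) with hvdef
  have hum : Measurable u :=
    (((hf.comp measurable_snd).abs).mul (hrc.measurable.pow_const _)).ennreal_ofReal
  have hvm : Measurable v :=
    (((hg.comp measurable_fst).abs).mul (hrc.measurable.pow_const _)).ennreal_ofReal
  have hφm : Measurable fun z : ℝ × E2 => ENNReal.ofReal (|f z.2| * |g z.1| / r z) :=
    ((((hf.comp measurable_snd).abs).mul ((hg.comp measurable_fst).abs)).div
      hrc.measurable).ennreal_ofReal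
  have step1 : (∫⁻ s in Set.Ioc (0:ℝ) L, ∫⁻ x in Ω,
        ENNReal.ofReal (|f x| * |g s| / ‖x - γ s‖))
      = ∫⁻ z, ENNReal.ofReal (|f z.2| * |g z.1| / r z) ∂μpr :=
    lintegral_lintegral hφm.aemeasurable
  have step2 : ∀ z : ℝ × E2, ENNReal.ofReal (|f z.2| * |g z.1| / r z) = (u * v) z := by
    intro z
    rcases eq_or_lt_of_le (norm_nonneg (z.2 - γ z.1)) with h0 | h0
    · have hr0 : r z = 0 := h0.symm
      simp only [hudef, hvdef, Pi.mul_apply, hr0]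
      rw [Real.zero_rpow (by norm_num), Real.zero_rpow (by norm_num)]
      simp
    · have hr0 : 0 < r z := h0
      simp only [hudef, hvdef, Pi.mul_apply]
      rw [← ENNReal.ofReal_mul (by positivity)]
      congr 1
      have hmulpow : r z ^ (-(4⁻¹:ℝ)) * r z ^ (-(3/4:ℝ)) = (r z)⁻¹ := by
        rw [← Real.rpow_add hr0, show (-(4⁻¹:ℝ)) + -(3/4) = -1 by norm_num,
          Real.rpow_neg_one]
      calc |f z.2| * |g z.1| / r z = |f z.2| * |g z.1| * (r z)⁻¹ := div_eq_mul_inv _ _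
        _ = |f z.2| * |g z.1| * (r z ^ (-(4⁻¹:ℝ)) * r z ^ (-(3/4:ℝ))) := by rw [hmulpow]
        _ = |f z.2| * r z ^ (-(4⁻¹:ℝ)) * (|g z.1| * r z ^ (-(3/4:ℝ))) := by ring
  have hpq : Real.HolderConjugate 2 2 := Real.HolderConjugate.two_two
  have step3 := ENNReal.lintegral_mul_le_Lp_mul_Lq μpr hpq hum.aemeasurable hvm.aemeasurable
  -- bound for ∫⁻ u ^ 2
  have hueq : ∀ z : ℝ × E2, u z ^ (2:ℝ) = ENNReal.ofReal (f z.2 ^ 2 * r z ^ (-(2⁻¹:ℝ))) := by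
    intro z
    simp only [hudef]
    rw [ENNReal.ofReal_rpow_of_nonneg (by positivity) (by norm_num)]
    congr 1
    rw [Real.mul_rpow (abs_nonneg _) (Real.rpow_nonneg (norm_nonneg _) _)]
    congr 1
    · rw [show ((2:ℝ)) = ((2:ℕ):ℝ) by norm_num, Real.rpow_natCast, sq_abs]
    · rw [← Real.rpow_mul (norm_nonneg _ : (0:ℝ) ≤ r z)]
      norm_num
      rfl
  have hveq : ∀ z : ℝ × E2, v z ^ (2:ℝ) = ENNReal.ofReal (g z.1 ^ 2 * r z ^ (-(3/2:ℝ))) := by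
    intro z
    simp only [hvdef]
    rw [ENNReal.ofReal_rpow_of_nonneg (by positivity) (by norm_num)]
    congr 1
    rw [Real.mul_rpow (abs_nonneg _) (Real.rpow_nonneg (norm_nonneg _) _)]
    congr 1
    · rw [show ((2:ℝ)) = ((2:ℕ):ℝ) by norm_num, Real.rpow_natCast, sq_abs]
    · rw [← Real.rpow_mul (norm_nonneg _ : (0:ℝ) ≤ r z)]
      norm_num
      rfl
  have humeas2 : Measurable fun z : ℝ × E2 => ENNReal.ofReal (f z.2 ^ 2 * r z ^ (-(2⁻¹:ℝ))) :=
    (((hf.comp measurable_snd).pow_const 2).mul (hrc.measurable.pow_const _)).ennreal_ofReal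
  have hvmeas2 : Measurable fun z : ℝ × E2 => ENNReal.ofReal (g z.1 ^ 2 * r z ^ (-(3/2:ℝ))) :=
    (((hg.comp measurable_fst).pow_const 2).mul (hrc.measurable.pow_const _)).ennreal_ofReal
  have key_u : ∫⁻ z, u z ^ (2:ℝ) ∂μpr ≤ ENNReal.ofReal (∫ x in Ω, f x ^ 2) * ENNReal.ofReal A := by
    calc ∫⁻ z, u z ^ (2:ℝ) ∂μpr
        = ∫⁻ z, ENNReal.ofReal (f z.2 ^ 2 * r z ^ (-(2⁻¹:ℝ))) ∂μpr := lintegral_congr hueq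
      _ = ∫⁻ x in Ω, ∫⁻ s in Set.Ioc (0:ℝ) L,
            ENNReal.ofReal (f x ^ 2 * ‖x - γ s‖ ^ (-(2⁻¹:ℝ))) :=
          lintegral_prod_symm _ humeas2.aemeasurable
      _ ≤ ∫⁻ x in Ω, ENNReal.ofReal (f x ^ 2) * ENNReal.ofReal A := by
          refine lintegral_mono fun x => ?_
          calc ∫⁻ s in Set.Ioc (0:ℝ) L, ENNReal.ofReal (f x ^ 2 * ‖x - γ s‖ ^ (-(2⁻¹:ℝ)))
              = ∫⁻ s in Set.Ioc (0:ℝ) L,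
                  ENNReal.ofReal (f x ^ 2) * ENNReal.ofReal (‖x - γ s‖ ^ (-(2⁻¹:ℝ))) := by
                simp_rw [← ENNReal.ofReal_mul (sq_nonneg (f x))]
            _ = ENNReal.ofReal (f x ^ 2) *
                  ∫⁻ s in Set.Ioc (0:ℝ) L, ENNReal.ofReal (‖x - γ s‖ ^ (-(2⁻¹:ℝ))) :=
                lintegral_const_mul' _ _ ENNReal.ofReal_ne_top
            _ ≤ ENNReal.ofReal (f x ^ 2) * ENNReal.ofReal A :=
                mul_le_mul_right (line_bound L c hL hc γ hcont hchord x) _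
      _ = (∫⁻ x in Ω, ENNReal.ofReal (f x ^ 2)) * ENNReal.ofReal A :=
          lintegral_mul_const' _ _ ENNReal.ofReal_ne_top
      _ = ENNReal.ofReal (∫ x in Ω, f x ^ 2) * ENNReal.ofReal A := by
          rw [ofReal_integral_eq_lintegral_ofReal hfi (ae_of_all _ fun x => sq_nonneg _)]
  have key_v : ∫⁻ z, v z ^ (2:ℝ) ∂μpr
      ≤ ENNReal.ofReal (∫ s in Set.Ioc (0:ℝ) L, g s ^ 2) * ENNReal.ofReal B := by
    calc ∫⁻ z, v z ^ (2:ℝ) ∂μpr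
        = ∫⁻ z, ENNReal.ofReal (g z.1 ^ 2 * r z ^ (-(3/2:ℝ))) ∂μpr := lintegral_congr hveq
      _ = ∫⁻ s in Set.Ioc (0:ℝ) L, ∫⁻ x in Ω,
            ENNReal.ofReal (g s ^ 2 * ‖x - γ s‖ ^ (-(3/2:ℝ))) :=
          lintegral_prod _ hvmeas2.aemeasurable
      _ ≤ ∫⁻ s in Set.Ioc (0:ℝ) L, ENNReal.ofReal (g s ^ 2) * ENNReal.ofReal B := by
          refine lintegral_mono fun s => ?_
          calc ∫⁻ x in Ω, ENNReal.ofReal (g s ^ 2 * ‖x - γ s‖ ^ (-(3/2:ℝ)))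
              = ∫⁻ x in Ω,
                  ENNReal.ofReal (g s ^ 2) * ENNReal.ofReal (‖x - γ s‖ ^ (-(3/2:ℝ))) := by
                simp_rw [← ENNReal.ofReal_mul (sq_nonneg (g s))]
            _ = ENNReal.ofReal (g s ^ 2) *
                  ∫⁻ x in Ω, ENNReal.ofReal (‖x - γ s‖ ^ (-(3/2:ℝ))) :=
                lintegral_const_mul' _ _ ENNReal.ofReal_ne_top
            _ ≤ ENNReal.ofReal (g s ^ 2) * ENNReal.ofReal B := by
                refine mul_le_mul_right ?_ _
                exact area_bound R hR Ω hΩm hΩ (γ s)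
      _ = (∫⁻ s in Set.Ioc (0:ℝ) L, ENNReal.ofReal (g s ^ 2)) * ENNReal.ofReal B :=
          lintegral_mul_const' _ _ ENNReal.ofReal_ne_top
      _ = ENNReal.ofReal (∫ s in Set.Ioc (0:ℝ) L, g s ^ 2) * ENNReal.ofReal B := by
          rw [ofReal_integral_eq_lintegral_ofReal hgi (ae_of_all _ fun s => sq_nonneg _)]
  have hI1 : 0 ≤ ∫ x in Ω, f x ^ 2 := integral_nonneg fun x => sq_nonneg _
  have hI2 : 0 ≤ ∫ s in Set.Ioc (0:ℝ) L, g s ^ 2 := integral_nonneg fun s => sq_nonneg _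
  calc ∫⁻ s in Set.Ioc (0:ℝ) L, ∫⁻ x in Ω, ENNReal.ofReal (|f x| * |g s| / ‖x - γ s‖)
      = ∫⁻ z, (u * v) z ∂μpr := by rw [step1]; exact lintegral_congr step2
    _ ≤ (∫⁻ z, u z ^ (2:ℝ) ∂μpr) ^ (1/(2:ℝ)) * (∫⁻ z, v z ^ (2:ℝ) ∂μpr) ^ (1/(2:ℝ)) := step3
    _ ≤ (ENNReal.ofReal (∫ x in Ω, f x ^ 2) * ENNReal.ofReal A) ^ (1/(2:ℝ)) *
        (ENNReal.ofReal (∫ s in Set.Ioc (0:ℝ) L, g s ^ 2) * ENNReal.ofReal B) ^ (1/(2:ℝ)) := by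
        gcongr
    _ = ENNReal.ofReal (Real.sqrt A * Real.sqrt B * Real.sqrt (∫ x in Ω, f x ^ 2)
          * Real.sqrt (∫ s in Set.Ioc (0:ℝ) L, g s ^ 2)) := by
        rw [← ENNReal.ofReal_mul hI1, ← ENNReal.ofReal_mul hI2,
          ENNReal.ofReal_rpow_of_nonneg (by positivity) (by norm_num),
          ENNReal.ofReal_rpow_of_nonneg (by positivity) (by norm_num),
          ← ENNReal.ofReal_mul (by positivity)]
        congr 1
        rw [← Real.sqrt_eq_rpow, ← Real.sqrt_eq_rpow, Real.sqrt_mul hI1, Real.sqrt_mul hI2]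
        ring
end
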